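/- arXiv:2206.13086 — 7 statements merged into one kernel-verified Lean document; each statement's English description precedes it below -/
import Mathlib

section
/- Assume γ ≥ 0 and that p_1, …, p_d are pairwise distinct. For τ ∈ {0, …, d} let J_τ ⊆ {1, …, d} be the set of indices of the τ largest values among p_1, …, p_d (with J_0 = ∅), and define π(τ) = Σ_{j∈J_τ} Σ_{l=0}^{d−1} (2 p_j/(τ+l+γ+1)) P(Γ_{∖j} = l) + Σ_{l=0}^{d} (γ/(τ+l+γ)) P(Γ = l), with the convention γ/(τ+l+γ) := 0 when τ = l = γ = 0. Then a vector v ∈ {0,1}^d is a maximizer of v ↦ Dice_γ(v; p) over {0,1}^d if and only if v is the indicator vector of J_{τ*} for some τ* maximizing π over {0, 1, …, d}. -/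
open Finset

/-- Weight of a binary configuration `y` under independent Bernoulli probabilities `p`:
`P(Y = y) = ∏ⱼ pⱼ^{yⱼ} (1-pⱼ)^{1-yⱼ}`. -/
noncomputable def bw {d : ℕ} (p : Fin d → ℝ) (y : Fin d → Bool) : ℝ :=
  ∏ j, if y j = true then p j else 1 - p j

/-- Number of `true` coordinates of `y`. -/
def cnt {d : ℕ} (y : Fin d → Bool) : ℕ :=
  (Finset.univ.filter (fun j => y j = true)).card

/-- The Dice score `Dice_γ(v; p) = E[(2 Σⱼ vⱼ Yⱼ + γ)/(Σⱼ Yⱼ + Σⱼ vⱼ + γ)]`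
for independent Bernoulli `Yⱼ` with success probabilities `pⱼ` (convention 0/0 = 0,
which is Lean's division). -/
noncomputable def dice {d : ℕ} (γ : ℝ) (p : Fin d → ℝ) (v : Fin d → Bool) : ℝ :=
  ∑ y : Fin d → Bool, bw p y *
    ((2 * ((Finset.univ.filter (fun j => v j = true ∧ y j = true)).card : ℝ) + γ) /
      ((cnt y : ℝ) + (cnt v : ℝ) + γ))

/-- `P(Γ_S = l)` where `Γ_S = Σ_{j ∈ S} Yⱼ` is a Poisson-binomial random variable. -/
noncomputable def pmfOn {d : ℕ} (S : Finset (Fin d)) (p : Fin d → ℝ) (l : ℕ) : ℝ :=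
  ∑ y : Fin d → Bool,
    if (∀ j, j ∉ S → y j = false) ∧ (S.filter (fun j => y j = true)).card = l then
      ∏ j ∈ S, (if y j = true then p j else 1 - p j)
    else 0

/-- Index set of the `τ` largest values among `p_1, …, p_d` (for pairwise distinct `p`). -/
noncomputable def topIdx {d : ℕ} (p : Fin d → ℝ) (τ : ℕ) : Finset (Fin d) :=
  Finset.univ.filter (fun j => (Finset.univ.filter (fun j' => p j ≤ p j')).card ≤ τ)

/-- The volume score
`π(τ) = Σ_{j ∈ J_τ} Σ_{l=0}^{d-1} (2 pⱼ/(τ+l+γ+1)) P(Γ_{∖j}=l)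
        + Σ_{l=0}^{d} (γ/(τ+l+γ)) P(Γ=l)`
(the convention `γ/(τ+l+γ) := 0` when `τ = l = γ = 0` is Lean's `0/0 = 0`). -/
noncomputable def diceScore {d : ℕ} (γ : ℝ) (p : Fin d → ℝ) (τ : ℕ) : ℝ :=
  (∑ j ∈ topIdx p τ, ∑ l ∈ Finset.range d,
      (2 * p j / ((τ : ℝ) + (l : ℝ) + γ + 1)) * pmfOn (Finset.univ.erase j) p l)
  + ∑ l ∈ Finset.range (d + 1), (γ / ((τ : ℝ) + (l : ℝ) + γ)) * pmfOn Finset.univ p l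

/-- configurations ↔ subsets -/
def boolEquiv (d : ℕ) : (Fin d → Bool) ≃ Finset (Fin d) where
  toFun y := Finset.univ.filter (fun i => y i = true)
  invFun T := fun i => decide (i ∈ T)
  left_inv y := by funext i; simp
  right_inv T := by ext i; simp

noncomputable def PP {d : ℕ} (p : Fin d → ℝ) (S T : Finset (Fin d)) : ℝ :=
  (∏ i ∈ T, p i) * ∏ i ∈ S \ T, (1 - p i)

lemma sum_boolEquiv {d : ℕ} (F : (Fin d → Bool) → ℝ) :
    ∑ y : Fin d → Bool, F y = ∑ T : Finset (Fin d), F (fun i => decide (i ∈ T)) := by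
  rw [← Equiv.sum_comp (boolEquiv d).symm F]
  rfl

lemma pmfOn_eq {d : ℕ} (S : Finset (Fin d)) (p : Fin d → ℝ) (l : ℕ) :
    pmfOn S p l = ∑ T ∈ S.powerset.filter (fun T => T.card = l), PP p S T := by
  rw [pmfOn, sum_boolEquiv]
  rw [show (Finset.univ : Finset (Finset (Fin d))) =
      (S.powerset.filter (fun T => T.card = l)) ∪
      (Finset.univ \ (S.powerset.filter (fun T => T.card = l))) by
    rw [Finset.union_sdiff_of_subset (Finset.subset_univ _)]]
  rw [Finset.sum_union (Finset.disjoint_sdiff)]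
  have h0 : ∀ T ∈ Finset.univ \ (S.powerset.filter (fun T => T.card = l)),
      (if (∀ j, j ∉ S → (decide (j ∈ T)) = false) ∧
          (S.filter (fun j => (decide (j ∈ T)) = true)).card = l then
        ∏ j ∈ S, (if (decide (j ∈ T)) = true then p j else 1 - p j) else 0) = 0 := by
    intro T hT
    simp only [mem_sdiff, mem_filter, mem_powerset, not_and] at hT
    rw [if_neg]
    rintro ⟨h1, h2⟩
    have hsub : T ⊆ S := by
      intro i hi
      by_contra hiS
      have := h1 i hiS
      simp [hi] at this
    have hfe : S.filter (fun j => (decide (j ∈ T)) = true) = T := by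
      ext i; simp only [mem_filter, decide_eq_true_eq]
      exact ⟨fun h => h.2, fun h => ⟨hsub h, h⟩⟩
    rw [hfe] at h2
    exact hT.2 hsub h2
  rw [Finset.sum_eq_zero h0, add_zero]
  refine Finset.sum_congr rfl (fun T hT => ?_)
  simp only [mem_filter, mem_powerset] at hT
  obtain ⟨hsub, hcard⟩ := hT
  have hc1 : (∀ j, j ∉ S → (decide (j ∈ T)) = false) := by
    intro j hj; simp only [decide_eq_false_iff_not]; exact fun h => hj (hsub h)
  have hc2 : S.filter (fun j => (decide (j ∈ T)) = true) = T := by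
    ext i; simp only [mem_filter, decide_eq_true_eq]
    exact ⟨fun h => h.2, fun h => ⟨hsub h, h⟩⟩
  rw [if_pos ⟨hc1, by rw [hc2]; exact hcard⟩]
  rw [PP, ← Finset.prod_filter_mul_prod_filter_not S (fun j => j ∈ T)]
  have hfe1 : S.filter (fun j => j ∈ T) = T := by
    ext i; simp only [mem_filter]
    exact ⟨fun h => h.2, fun h => ⟨hsub h, h⟩⟩
  have hfe2 : S.filter (fun j => j ∉ T) = S \ T := by
    ext i; simp [mem_sdiff]
  rw [hfe1, hfe2]
  congr 1
  · exact Finset.prod_congr rfl (fun i hi => by simp [hi])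
  · refine Finset.prod_congr rfl (fun i hi => ?_)
    simp only [mem_sdiff] at hi
    simp [hi.2]

lemma PP_total {d : ℕ} (p : Fin d → ℝ) (S : Finset (Fin d)) :
    ∑ T ∈ S.powerset, PP p S T = 1 := by
  have := Finset.prod_add (fun i => p i) (fun i => 1 - p i) S
  simp only [add_sub_cancel, Finset.prod_const_one] at this
  rw [this]
  rfl

lemma PP_nonneg {d : ℕ} {p : Fin d → ℝ} (hp : ∀ j, p j ∈ Set.Icc (0 : ℝ) 1)
    (S T : Finset (Fin d)) : 0 ≤ PP p S T := by
  refine mul_nonneg (Finset.prod_nonneg fun i _ => (hp i).1)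
    (Finset.prod_nonneg fun i _ => by linarith [(hp i).2])

lemma pmfOn_nonneg {d : ℕ} {p : Fin d → ℝ} (hp : ∀ j, p j ∈ Set.Icc (0 : ℝ) 1)
    (S : Finset (Fin d)) (l : ℕ) : 0 ≤ pmfOn S p l := by
  rw [pmfOn_eq]
  exact Finset.sum_nonneg fun T _ => PP_nonneg hp S T

lemma bw_sum_eq {d : ℕ} (p : Fin d → ℝ) (F : Finset (Fin d) → ℝ) :
    ∑ y : Fin d → Bool, bw p y * F (Finset.univ.filter (fun i => y i = true)) =
      ∑ T : Finset (Fin d), PP p Finset.univ T * F T := by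
  rw [sum_boolEquiv (fun y => bw p y * F (Finset.univ.filter (fun i => y i = true)))]
  refine Finset.sum_congr rfl (fun T _ => ?_)
  have h1 : (Finset.univ.filter (fun i => (decide (i ∈ T)) = true)) = T := by
    ext i; simp
  rw [h1]
  congr 1
  rw [bw, ← Finset.prod_filter_mul_prod_filter_not Finset.univ (fun j => j ∈ T)]
  have hfe1 : Finset.univ.filter (fun j : Fin d => j ∈ T) = T := by ext i; simp
  have hfe2 : Finset.univ.filter (fun j : Fin d => j ∉ T) = Finset.univ \ T := by
    ext i; simp
  rw [hfe1, hfe2]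
  unfold PP
  congr 1
  · exact Finset.prod_congr rfl (fun i hi => by simp [hi])
  · refine Finset.prod_congr rfl (fun i hi => ?_)
    simp only [mem_sdiff] at hi
    simp [hi.2]

lemma group_by_card {d : ℕ} (p : Fin d → ℝ) (S : Finset (Fin d)) (n : ℕ)
    (hn : S.card < n) (f : ℕ → ℝ) :
    ∑ T ∈ S.powerset, PP p S T * f T.card =
      ∑ l ∈ Finset.range n, pmfOn S p l * f l := by
  rw [← Finset.sum_fiberwise_of_maps_to (g := fun T : Finset (Fin d) => T.card)
    (t := Finset.range n) (fun T hT => by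
      simp only [Finset.mem_powerset] at hT
      exact Finset.mem_range.mpr (lt_of_le_of_lt (Finset.card_le_card hT) hn))]
  refine Finset.sum_congr rfl (fun l _ => ?_)
  rw [pmfOn_eq, Finset.sum_mul]
  refine Finset.sum_congr rfl (fun T hT => ?_)
  simp only [Finset.mem_filter] at hT
  rw [hT.2]

lemma sum_bw_count {d : ℕ} (p : Fin d → ℝ) (f : ℕ → ℝ) :
    ∑ y : Fin d → Bool, bw p y * f (cnt y) =
      ∑ l ∈ Finset.range (d + 1), pmfOn Finset.univ p l * f l := by
  have h := bw_sum_eq p (fun T => f T.card)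
  simp only [cnt]
  rw [h, ← group_by_card p Finset.univ (d + 1) (by simp) f, Finset.powerset_univ]

lemma sum_bw_marginal {d : ℕ} (p : Fin d → ℝ) (j : Fin d) (f : ℕ → ℝ) :
    ∑ y : Fin d → Bool, bw p y * ((if y j = true then (1:ℝ) else 0) * f (cnt y)) =
      ∑ l ∈ Finset.range d, (p j * f (l + 1)) * pmfOn (Finset.univ.erase j) p l := by
  have h := bw_sum_eq p (fun T => (if j ∈ T then (1:ℝ) else 0) * f T.card)
  have hpt : ∀ y : Fin d → Bool,
      bw p y * ((if y j = true then (1:ℝ) else 0) * f (cnt y)) =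
      bw p y * ((if j ∈ Finset.univ.filter (fun i => y i = true) then (1:ℝ) else 0) *
        f ((Finset.univ.filter (fun i => y i = true)).card)) := by
    intro y; simp [cnt]
  rw [Finset.sum_congr rfl (fun y _ => hpt y), h]
  -- split over whether j ∈ T
  rw [← Finset.sum_filter_add_sum_filter_not Finset.univ (fun T : Finset (Fin d) => j ∈ T)]
  have hz : ∀ T ∈ Finset.univ.filter (fun T : Finset (Fin d) => j ∉ T),
      PP p Finset.univ T * ((if j ∈ T then (1:ℝ) else 0) * f T.card) = 0 := by
    intro T hT
    simp only [Finset.mem_filter] at hT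
    simp [hT.2]
  rw [Finset.sum_eq_zero hz, add_zero]
  have hre : ∑ T ∈ Finset.univ.filter (fun T : Finset (Fin d) => j ∈ T),
      PP p Finset.univ T * ((if j ∈ T then (1:ℝ) else 0) * f T.card) =
      ∑ T ∈ (Finset.univ.erase j).powerset,
        PP p (Finset.univ.erase j) T * (p j * f (T.card + 1)) := by
    refine Finset.sum_nbij' (fun T => Finset.erase T j) (fun T => insert j T)
      ?_ ?_ ?_ ?_ ?_
    · intro T hT
      simp only [Finset.mem_filter, Finset.mem_univ, true_and] at hT
      simp only [Finset.mem_powerset]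
      exact Finset.erase_subset_erase j (Finset.subset_univ T)
    · intro T hT
      simp only [Finset.mem_powerset] at hT
      simp only [Finset.mem_filter, Finset.mem_univ, true_and]
      exact Finset.mem_insert_self j T
    · intro T hT
      simp only [Finset.mem_filter, Finset.mem_univ, true_and] at hT
      exact Finset.insert_erase hT
    · intro T hT
      simp only [Finset.mem_powerset] at hT
      refine Finset.erase_insert (fun hj => ?_)
      exact (Finset.mem_erase.mp (hT hj)).1 rfl
    · intro T hT
      simp only [Finset.mem_filter, Finset.mem_univ, true_and] at hT
      have hcard : T.card = (T.erase j).card + 1 := by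
        rw [Finset.card_erase_of_mem hT]
        have : 1 ≤ T.card := Finset.card_pos.mpr ⟨j, hT⟩
        omega
      have hPP : PP p Finset.univ T = p j * PP p (Finset.univ.erase j) (T.erase j) := by
        unfold PP
        rw [← Finset.mul_prod_erase T p hT]
        have : Finset.univ \ T = (Finset.univ.erase j) \ (T.erase j) := by
          ext i
          by_cases hij : i = j
          · subst hij; simp [hT]
          · simp [Finset.mem_erase, hij]
        rw [this]; ring
      rw [hPP, hcard, if_pos hT]
      ring
  rw [hre, group_by_card p (Finset.univ.erase j) d
      (by rw [Finset.card_erase_of_mem (Finset.mem_univ j), Finset.card_univ,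
        Fintype.card_fin]; have := j.isLt; omega) (fun l => p j * f (l + 1))]
  exact Finset.sum_congr rfl (fun l _ => by ring)

noncomputable def AA {d : ℕ} (γ : ℝ) (p : Fin d → ℝ) (τ : ℕ) (j : Fin d) : ℝ :=
  ∑ l ∈ Finset.range d, (2 * p j / ((τ : ℝ) + (l : ℝ) + γ + 1)) * pmfOn (Finset.univ.erase j) p l

noncomputable def BB {d : ℕ} (γ : ℝ) (p : Fin d → ℝ) (τ : ℕ) : ℝ :=
  ∑ l ∈ Finset.range (d + 1), (γ / ((τ : ℝ) + (l : ℝ) + γ)) * pmfOn Finset.univ p l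

lemma dice_eq {d : ℕ} (γ : ℝ) (p : Fin d → ℝ) (v : Fin d → Bool) :
    dice γ p v = (∑ j ∈ Finset.univ.filter (fun j => v j = true), AA γ p (cnt v) j)
      + BB γ p (cnt v) := by
  set V := Finset.univ.filter (fun j => v j = true) with hV
  set τ := cnt v with hτ
  have hpt : ∀ y : Fin d → Bool,
      bw p y * ((2 * ((Finset.univ.filter (fun j => v j = true ∧ y j = true)).card : ℝ) + γ) /
        ((cnt y : ℝ) + (τ : ℝ) + γ)) =
      (∑ j ∈ V, bw p y * ((if y j = true then (1:ℝ) else 0) *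
        (2 / ((cnt y : ℝ) + (τ : ℝ) + γ)))) +
        bw p y * (γ / ((cnt y : ℝ) + (τ : ℝ) + γ)) := by
    intro y
    have hN : ((Finset.univ.filter (fun j => v j = true ∧ y j = true)).card : ℝ) =
        ∑ j ∈ V, (if y j = true then (1:ℝ) else 0) := by
      rw [show (Finset.univ.filter (fun j => v j = true ∧ y j = true)) =
          V.filter (fun j => y j = true) by rw [hV, Finset.filter_filter]]
      rw [Finset.card_filter]
      push_cast
      rfl
    rw [hN, add_div, mul_add]
    congr 1
    rw [Finset.mul_sum, Finset.sum_div, Finset.mul_sum]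
    refine Finset.sum_congr rfl (fun j _ => ?_)
    ring
  rw [dice, Finset.sum_congr rfl (fun y _ => hpt y), Finset.sum_add_distrib]
  congr 1
  · rw [Finset.sum_comm]
    refine Finset.sum_congr rfl (fun j _ => ?_)
    rw [sum_bw_marginal p j (fun m => 2 / ((m : ℝ) + (τ : ℝ) + γ)), AA]
    refine Finset.sum_congr rfl (fun l _ => ?_)
    push_cast
    ring
  · rw [sum_bw_count p (fun m => γ / ((m : ℝ) + (τ : ℝ) + γ)), BB]
    refine Finset.sum_congr rfl (fun l _ => ?_)
    rw [show ((l : ℝ) + (τ : ℝ) + γ) = ((τ : ℝ) + (l : ℝ) + γ) by ring]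
    ring

lemma powerset_split {d : ℕ} (S : Finset (Fin d)) (k : Fin d) (hk : k ∈ S)
    (g : Finset (Fin d) → ℝ) :
    ∑ T ∈ S.powerset, g T = ∑ T ∈ (S.erase k).powerset, (g T + g (insert k T)) := by
  have e1 : ∑ T ∈ S.powerset.filter (fun T => k ∉ T), g T =
      ∑ T ∈ (S.erase k).powerset, g T := by
    refine Finset.sum_congr ?_ (fun T _ => rfl)
    ext T
    simp only [Finset.mem_filter, Finset.mem_powerset, Finset.subset_erase]
  have e2 : ∑ T ∈ S.powerset.filter (fun T => k ∈ T), g T =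
      ∑ T ∈ (S.erase k).powerset, g (insert k T) := by
    refine Finset.sum_nbij' (fun T => Finset.erase T k) (fun T => insert k T)
      ?_ ?_ ?_ ?_ ?_
    · intro T hT
      simp only [Finset.mem_filter, Finset.mem_powerset] at hT
      simp only [Finset.mem_powerset]
      exact Finset.erase_subset_erase k hT.1
    · intro T hT
      simp only [Finset.mem_powerset, Finset.subset_erase] at hT
      simp only [Finset.mem_filter, Finset.mem_powerset]
      exact ⟨Finset.insert_subset hk hT.1, Finset.mem_insert_self k T⟩
    · intro T hT
      simp only [Finset.mem_filter] at hT
      exact Finset.insert_erase hT.2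
    · intro T hT
      simp only [Finset.mem_powerset, Finset.subset_erase] at hT
      exact Finset.erase_insert hT.2
    · intro T hT
      simp only [Finset.mem_filter] at hT
      rw [Finset.insert_erase hT.2]
  rw [← Finset.sum_filter_add_sum_filter_not S.powerset (fun T => k ∈ T),
    Finset.sum_add_distrib, e1, e2, add_comm]

lemma AA_rep {d : ℕ} (γ : ℝ) (p : Fin d → ℝ) (τ : ℕ) (j k : Fin d) (hjk : j ≠ k) :
    AA γ p τ j = ∑ T ∈ ((Finset.univ.erase j).erase k).powerset,
      PP p ((Finset.univ.erase j).erase k) T *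
      ((1 - p k) * (2 * p j / ((τ : ℝ) + (T.card : ℝ) + γ + 1)) +
        p k * (2 * p j / ((τ : ℝ) + ((T.card : ℝ) + 1) + γ + 1))) := by
  set S := Finset.univ.erase j with hS
  have hkS : k ∈ S := Finset.mem_erase.mpr ⟨fun h => hjk h.symm, Finset.mem_univ k⟩
  have hcard : S.card < d := by
    rw [hS, Finset.card_erase_of_mem (Finset.mem_univ j), Finset.card_univ,
      Fintype.card_fin]
    have := j.isLt; omega
  have h1 : AA γ p τ j = ∑ T ∈ S.powerset, PP p S T *
      (2 * p j / ((τ : ℝ) + (T.card : ℝ) + γ + 1)) := by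
    rw [AA, ← hS]
    rw [Finset.sum_congr rfl (fun l (_ : l ∈ Finset.range d) =>
      mul_comm (2 * p j / ((τ : ℝ) + (l : ℝ) + γ + 1)) (pmfOn S p l))]
    rw [← group_by_card p S d hcard (fun l => 2 * p j / ((τ : ℝ) + (l : ℝ) + γ + 1))]
  rw [h1, powerset_split S k hkS]
  refine Finset.sum_congr rfl (fun T hT => ?_)
  simp only [Finset.mem_powerset, Finset.subset_erase] at hT
  obtain ⟨hTS, hkT⟩ := hT
  have hPP1 : PP p S T = (1 - p k) * PP p (S.erase k) T := by
    unfold PP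
    have hsd : S \ T = insert k ((S.erase k) \ T) := by
      ext i
      by_cases hik : i = k
      · subst hik; simp [hkS, hkT]
      · simp [Finset.mem_erase, hik]
    rw [hsd, Finset.prod_insert (by simp [Finset.mem_sdiff])]
    ring
  have hPP2 : PP p S (insert k T) = p k * PP p (S.erase k) T := by
    unfold PP
    have hsd : S \ insert k T = (S.erase k) \ T := by
      ext i
      by_cases hik : i = k
      · subst hik; simp
      · simp [Finset.mem_erase, hik]
    rw [hsd, Finset.prod_insert hkT]
    ring
  rw [hPP1, hPP2, Finset.card_insert_of_notMem hkT]
  push_cast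
  ring

lemma AA_strict {d : ℕ} {γ : ℝ} (hγ : 0 ≤ γ) {p : Fin d → ℝ}
    (hp : ∀ j, p j ∈ Set.Icc (0 : ℝ) 1) (τ : ℕ) {j k : Fin d} (hlt : p k < p j) :
    AA γ p τ k < AA γ p τ j := by
  have hjk : j ≠ k := fun h => absurd (h ▸ hlt) (lt_irrefl _)
  set U := (Finset.univ.erase j).erase k with hU
  have hU' : (Finset.univ.erase k).erase j = U := by
    rw [hU, Finset.erase_right_comm]
  have hj := AA_rep γ p τ j k hjk
  have hk := AA_rep γ p τ k j hjk.symm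
  rw [hU'] at hk
  rw [← hU] at hj
  have hdiff : AA γ p τ j - AA γ p τ k =
      ∑ T ∈ U.powerset, PP p U T * (2 * (p j - p k) / ((τ : ℝ) + (T.card : ℝ) + γ + 1)) := by
    rw [hj, hk, ← Finset.sum_sub_distrib]
    refine Finset.sum_congr rfl (fun T _ => ?_)
    ring
  have hpos : (0 : ℝ) < 2 * (p j - p k) / ((τ : ℝ) + (d : ℝ) + γ + 1) := by
    apply div_pos (by linarith)
    positivity
  have hbound : ∀ T ∈ U.powerset, PP p U T * (2 * (p j - p k) / ((τ : ℝ) + (d : ℝ) + γ + 1))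
      ≤ PP p U T * (2 * (p j - p k) / ((τ : ℝ) + (T.card : ℝ) + γ + 1)) := by
    intro T hT
    refine mul_le_mul_of_nonneg_left ?_ (PP_nonneg hp U T)
    apply div_le_div_of_nonneg_left (by linarith) (by positivity)
    have hTd : (T.card : ℝ) ≤ (d : ℝ) := by
      exact_mod_cast le_trans (Finset.card_le_card (Finset.mem_powerset.mp hT))
        (le_trans (Finset.card_le_univ U) (by simp))
    linarith
  have hsum : (2 * (p j - p k) / ((τ : ℝ) + (d : ℝ) + γ + 1)) ≤
      ∑ T ∈ U.powerset, PP p U T * (2 * (p j - p k) / ((τ : ℝ) + (T.card : ℝ) + γ + 1)) := by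
    calc (2 * (p j - p k) / ((τ : ℝ) + (d : ℝ) + γ + 1))
        = ∑ T ∈ U.powerset, PP p U T * (2 * (p j - p k) / ((τ : ℝ) + (d : ℝ) + γ + 1)) := by
          rw [← Finset.sum_mul, PP_total, one_mul]
      _ ≤ _ := Finset.sum_le_sum hbound
  linarith [hsum, hpos, hdiff]

noncomputable def rnk {d : ℕ} (p : Fin d → ℝ) (j : Fin d) : ℕ :=
  (Finset.univ.filter (fun j' => p j ≤ p j')).card

lemma rnk_lt_of_lt {d : ℕ} {p : Fin d → ℝ} {j k : Fin d} (h : p j < p k) :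
    rnk p k < rnk p j := by
  apply Finset.card_lt_card
  rw [Finset.ssubset_iff_of_subset]
  · exact ⟨j, by simp, by simp [not_le.mpr h]⟩
  · intro i hi
    simp only [Finset.mem_filter, Finset.mem_univ, true_and] at *
    linarith

lemma rnk_inj {d : ℕ} {p : Fin d → ℝ} (hdist : Function.Injective p) :
    Function.Injective (rnk p) := by
  intro j k h
  by_contra hne
  rcases lt_trichotomy (p j) (p k) with h1 | h1 | h1
  · have := rnk_lt_of_lt h1; omega
  · exact hne (hdist h1)
  · have := rnk_lt_of_lt h1; omega

lemma rnk_mem_Icc {d : ℕ} (p : Fin d → ℝ) (j : Fin d) : rnk p j ∈ Finset.Icc 1 d := by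
  simp only [Finset.mem_Icc]
  constructor
  · refine Finset.card_pos.mpr ⟨j, ?_⟩
    simp
  · exact le_trans (Finset.card_le_univ _) (by simp)

lemma rnk_image {d : ℕ} {p : Fin d → ℝ} (hdist : Function.Injective p) :
    Finset.univ.image (rnk p) = Finset.Icc 1 d := by
  apply Finset.eq_of_subset_of_card_le
  · intro m hm
    simp only [Finset.mem_image] at hm
    obtain ⟨j, -, rfl⟩ := hm
    exact rnk_mem_Icc p j
  · rw [Finset.card_image_of_injective _ (rnk_inj hdist)]
    simp [Nat.card_Icc]

lemma topIdx_card {d : ℕ} {p : Fin d → ℝ} (hdist : Function.Injective p)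
    {τ : ℕ} (hτ : τ ≤ d) : (topIdx p τ).card = τ := by
  have h1 : topIdx p τ = Finset.univ.filter (fun j => rnk p j ≤ τ) := rfl
  rw [h1]
  have h2 : ((Finset.univ.filter (fun j => rnk p j ≤ τ)).image (rnk p)).card =
      (Finset.univ.filter (fun j => rnk p j ≤ τ)).card :=
    Finset.card_image_of_injective _ (rnk_inj hdist)
  have h3 : (Finset.univ.filter (fun j => rnk p j ≤ τ)).image (rnk p) =
      ((Finset.univ.image (rnk p)).filter (fun m => m ≤ τ)) :=
    (Finset.filter_image (p := fun m => m ≤ τ) (f := rnk p) (s := Finset.univ)).symm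
  rw [← h2, h3, rnk_image hdist]
  rw [show (Finset.Icc 1 d).filter (fun m => m ≤ τ) = Finset.Icc 1 τ by
    ext m; simp only [Finset.mem_filter, Finset.mem_Icc]; omega]
  simp [Nat.card_Icc]

lemma lt_of_mem_notmem {d : ℕ} {p : Fin d → ℝ} (hdist : Function.Injective p) {τ : ℕ}
    {j k : Fin d} (hj : j ∈ topIdx p τ) (hk : k ∉ topIdx p τ) : p k < p j := by
  simp only [topIdx, Finset.mem_filter, Finset.mem_univ, true_and, not_le] at hj hk
  rcases lt_trichotomy (p k) (p j) with h | h | h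
  · exact h
  · have he := hdist h; subst he; omega
  · have := rnk_lt_of_lt h
    unfold rnk at this
    omega

lemma sum_lt_top {d : ℕ} {p : Fin d → ℝ} (hdist : Function.Injective p)
    (c : Fin d → ℝ) (hmono : ∀ {j k : Fin d}, p k < p j → c k < c j)
    (τ : ℕ) (V : Finset (Fin d)) (hV : V.card = (topIdx p τ).card)
    (hne : V ≠ topIdx p τ) :
    ∑ j ∈ V, c j < ∑ j ∈ topIdx p τ, c j := by
  set W := topIdx p τ with hW
  have hc1 := Finset.card_inter_add_card_sdiff V W
  have hc2 := Finset.card_inter_add_card_sdiff W V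
  rw [Finset.inter_comm] at hc2
  have hcards : (V \ W).card = (W \ V).card := by omega
  have hWVne : (W \ V).Nonempty := by
    rw [← Finset.card_pos]
    by_contra hc
    push_neg at hc
    have h0 : (V \ W).card = 0 := by omega
    have hsub : V ⊆ W := by
      rw [← Finset.sdiff_eq_empty_iff_subset]
      exact Finset.card_eq_zero.mp h0
    exact hne (Finset.eq_of_subset_of_card_le hsub (le_of_eq hV.symm))
  have hVWne : (V \ W).Nonempty := by
    rw [← Finset.card_pos, hcards, Finset.card_pos]; exact hWVne
  obtain ⟨a, haW, hamin⟩ := Finset.exists_min_image (W \ V) c hWVne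
  have key : ∑ j ∈ V \ W, c j < ∑ j ∈ W \ V, c j := by
    calc ∑ j ∈ V \ W, c j < ∑ _j ∈ V \ W, c a := by
          refine Finset.sum_lt_sum_of_nonempty hVWne (fun i hi => ?_)
          have hiV : i ∉ W := (Finset.mem_sdiff.mp hi).2
          exact hmono (lt_of_mem_notmem hdist (Finset.mem_sdiff.mp haW).1 hiV)
      _ = (W \ V).card • c a := by rw [Finset.sum_const, hcards]
      _ ≤ ∑ j ∈ W \ V, c j := Finset.card_nsmul_le_sum _ _ _ (fun i hi => hamin i hi)
  have e1 := Finset.sum_inter_add_sum_sdiff V W c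
  have e2 := Finset.sum_inter_add_sum_sdiff W V c
  rw [Finset.inter_comm] at e2
  linarith

/-- **The Bayes rule for Dice-segmentation.** `v` maximizes `Dice_γ(·; p)` over `{0,1}^d`
iff `v` is the indicator of the top-`τ*` index set for some `τ*` maximizing `π` over
`{0, 1, …, d}`. -/
theorem dice_bayes_rule {d : ℕ} (hd : 1 ≤ d) (γ : ℝ) (hγ : 0 ≤ γ)
    (p : Fin d → ℝ) (hp : ∀ j, p j ∈ Set.Icc (0 : ℝ) 1)
    (hdist : Function.Injective p) (v : Fin d → Bool) :
    (∀ w : Fin d → Bool, dice γ p w ≤ dice γ p v) ↔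
      ∃ τ ≤ d, (∀ τ' ≤ d, diceScore γ p τ' ≤ diceScore γ p τ) ∧
        v = fun j => decide (j ∈ topIdx p τ) := by
  classical
  have hcnt_le : ∀ w : Fin d → Bool, cnt w ≤ d := fun w => by
    simpa [cnt] using (Finset.card_filter_le Finset.univ (fun j => w j = true))
  have hVind : ∀ W : Finset (Fin d),
      Finset.univ.filter (fun j => (decide (j ∈ W)) = true) = W := fun W => by ext i; simp
  have hcntind : ∀ W : Finset (Fin d), cnt (fun j => decide (j ∈ W)) = W.card := fun W => by
    rw [cnt, hVind]
  have hscore : ∀ τ : ℕ, diceScore γ p τ =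
      (∑ j ∈ topIdx p τ, AA γ p τ j) + BB γ p τ := fun τ => rfl
  have hdice : ∀ w : Fin d → Bool, dice γ p w =
      (∑ j ∈ Finset.univ.filter (fun j => w j = true), AA γ p (cnt w) j) + BB γ p (cnt w) :=
    fun w => dice_eq γ p w
  have key2 : ∀ τ, τ ≤ d → dice γ p (fun j => decide (j ∈ topIdx p τ)) = diceScore γ p τ := by
    intro τ hτ
    rw [hdice, hVind, hcntind, topIdx_card hdist hτ, hscore]
  have key3 : ∀ w : Fin d → Bool,
      Finset.univ.filter (fun j => w j = true) ≠ topIdx p (cnt w) →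
      dice γ p w < diceScore γ p (cnt w) := by
    intro w hne
    rw [hdice, hscore]
    have hlt := sum_lt_top hdist (AA γ p (cnt w))
      (fun {j k} h => AA_strict hγ hp (cnt w) h) (cnt w)
      (Finset.univ.filter (fun j => w j = true))
      (by rw [topIdx_card hdist (hcnt_le w)]; rfl) hne
    linarith
  have key4 : ∀ w : Fin d → Bool, dice γ p w ≤ diceScore γ p (cnt w) := by
    intro w
    by_cases hne : Finset.univ.filter (fun j => w j = true) = topIdx p (cnt w)
    · rw [hdice, hscore, hne]
    · exact le_of_lt (key3 w hne)
  constructor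
  · intro hmax
    have hVv : Finset.univ.filter (fun j => v j = true) = topIdx p (cnt v) := by
      by_contra hne
      have h1 := key3 v hne
      have h2 := hmax (fun j => decide (j ∈ topIdx p (cnt v)))
      rw [key2 _ (hcnt_le v)] at h2
      linarith
    have hdv : dice γ p v = diceScore γ p (cnt v) := by rw [hdice, hVv, hscore]
    refine ⟨cnt v, hcnt_le v, ?_, ?_⟩
    · intro τ' hτ'
      have h2 := hmax (fun j => decide (j ∈ topIdx p τ'))
      rw [key2 _ hτ'] at h2
      linarith
    · funext j
      have hj : (j ∈ topIdx p (cnt v)) ↔ v j = true := by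
        rw [← hVv]; simp
      cases hb : v j
      · simp [hb] at hj
        simp [hj]
      · simp [hb] at hj
        simp [hj]
  · rintro ⟨τ, hτd, hmax', rfl⟩
    intro w
    calc dice γ p w ≤ diceScore γ p (cnt w) := key4 w
      _ ≤ diceScore γ p τ := hmax' _ (hcnt_le w)
      _ = dice γ p (fun j => decide (j ∈ topIdx p τ)) := (key2 τ hτd).symm
end

section
/- Let d = 2, γ = 0, p_1 = 0.45 and p_2 = 0.44, with Y_1, Y_2 independent Bernoulli(p_1), Bernoulli(p_2). Then Dice_0((1,1); p) = (2/3)(p_1 + p_2) − (1/3) p_1 p_2 and this value is strictly larger than each of Dice_0((1,0); p), Dice_0((0,1); p) and Dice_0((0,0); p); in particular, the 0.5-thresholding rule 1(p ≥ 0.5) = (0,0) is not a maximizer of Dice_0(·; p) over {0,1}², so thresholding the true conditional probabilities at 0.5 is not Dice-calibrated. -/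
open Finset

theorem sum4 (f : (Fin 2 → Bool) → ℝ) :
    ∑ y : Fin 2 → Bool, f y =
      f ![false,false] + f ![false,true] + f ![true,false] + f ![true,true] := by
  rw [show (univ : Finset (Fin 2 → Bool)) =
    {![false,false], ![false,true], ![true,false], ![true,true]} from by decide,
    Finset.sum_insert (by decide), Finset.sum_insert (by decide),
    Finset.sum_insert (by decide), Finset.sum_singleton]
  ring

theorem card1 (b : Fin 2 → Bool) : (univ.filter (fun j => b j = true)).card =
    (cond (b 0) 1 0) + (cond (b 1) 1 0) := by revert b; decide

theorem card2 (v y : Fin 2 → Bool) : (univ.filter (fun j => v j = true ∧ y j = true)).card =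
    (cond (v 0 && y 0) 1 0) + (cond (v 1 && y 1) 1 0) := by revert v y; decide

/-- **Thresholding at 0.5 is not Dice-calibrated.** With `d = 2`, `γ = 0`,
`p = (0.45, 0.44)`: `Dice_0((1,1); p) = (2/3)(p₁+p₂) - (1/3)p₁p₂`, this value is strictly
larger than each of `Dice_0((1,0); p)`, `Dice_0((0,1); p)`, `Dice_0((0,0); p)`; the
0.5-thresholding rule `1(p ≥ 0.5)` is `(0,0)` and is not a maximizer of `Dice_0(·; p)`. -/
theorem thresholding_not_dice_calibrated :
    let p : Fin 2 → ℝ := ![0.45, 0.44]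
    dice 0 p ![true, true] = 2 / 3 * (0.45 + 0.44) - 1 / 3 * (0.45 * 0.44) ∧
    dice 0 p ![true, false] < dice 0 p ![true, true] ∧
    dice 0 p ![false, true] < dice 0 p ![true, true] ∧
    dice 0 p ![false, false] < dice 0 p ![true, true] ∧
    (fun j => decide ((1 / 2 : ℝ) ≤ p j)) = ![false, false] ∧
    ¬ (∀ w : Fin 2 → Bool,
        dice 0 p w ≤ dice 0 p (fun j => decide ((1 / 2 : ℝ) ≤ p j))) := by
  intro p
  have hthr : (fun j => decide ((1 / 2 : ℝ) ≤ p j)) = ![false, false] := by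
    funext j; fin_cases j <;> simp [p] <;> norm_num
  have h11 : dice 0 p ![true, true] = 791/1500 := by
    simp only [dice, sum4, bw, cnt, Fin.prod_univ_two, card1, card2]
    norm_num [p]
  have h10 : dice 0 p ![true, false] = 48/125 := by
    simp only [dice, sum4, bw, cnt, Fin.prod_univ_two, card1, card2]
    norm_num [p]
  have h01 : dice 0 p ![false, true] = 187/500 := by
    simp only [dice, sum4, bw, cnt, Fin.prod_univ_two, card1, card2]
    norm_num [p]
  have h00 : dice 0 p ![false, false] = 0 := by
    simp only [dice, sum4, bw, cnt, Fin.prod_univ_two, card1, card2]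
    norm_num [p]
  refine ⟨by rw [h11]; norm_num, by rw [h10, h11]; norm_num,
    by rw [h01, h11]; norm_num, by rw [h00, h11]; norm_num, hthr, ?_⟩
  rw [hthr]
  push_neg
  exact ⟨![true, true], by rw [h00, h11]; norm_num⟩
end

section
/- For every γ ≥ 0 there exists a constant C > 0 depending only on γ such that for every integer d ≥ 1, all probability vectors p, q ∈ [0,1]^d, and every v ∈ {0,1}^d: |Dice_γ(v; q) − Dice_γ(v; p)| ≤ C Σ_{j=1}^{d} |q_j − p_j|. -/
open Finset

/-- single-coordinate weight -/
noncomputable def w {d : ℕ} (p : Fin d → ℝ) (j : Fin d) (b : Bool) : ℝ :=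
  if b = true then p j else 1 - p j

lemma bw_eq {d : ℕ} (p : Fin d → ℝ) (y : Fin d → Bool) :
    bw p y = ∏ j, w p j (y j) := rfl

lemma w_mem {d : ℕ} {p : Fin d → ℝ} (hp : ∀ j, p j ∈ Set.Icc (0:ℝ) 1) (j : Fin d) (b : Bool) :
    w p j b ∈ Set.Icc (0:ℝ) 1 := by
  obtain ⟨h0, h1⟩ := hp j
  cases b <;> simp only [w] <;> constructor <;> simp <;> linarith

lemma sum_prod_bool {d : ℕ} (h : Fin d → Bool → ℝ) :
    ∑ y : Fin d → Bool, ∏ j, h j (y j) = ∏ j, (h j false + h j true) := by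
  classical
  have key := Finset.prod_univ_sum (fun _ : Fin d => (Finset.univ : Finset Bool)) h
  rw [Fintype.piFinset_univ] at key
  rw [← key]
  exact Finset.prod_congr rfl (fun j _ => by simp [Fintype.sum_bool]; ring)

lemma hybrid_bound {d : ℕ} (p q : Fin d → ℝ)
    (hp : ∀ j, p j ∈ Set.Icc (0:ℝ) 1) (hq : ∀ j, q j ∈ Set.Icc (0:ℝ) 1)
    (s : Finset (Fin d)) :
    ∑ y : Fin d → Bool, |(∏ j, (if j ∈ s then w q j (y j) else w p j (y j))) - bw p y|
      ≤ 2 * ∑ j ∈ s, |q j - p j| := by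
  classical
  induction s using Finset.induction with
  | empty => simp [bw_eq]
  | @insert a s ha ih =>
    -- the one-coordinate swap contributes 2 * |q a - p a|
    have hAB : ∑ y : Fin d → Bool,
        |(∏ j, (if j ∈ insert a s then w q j (y j) else w p j (y j)))
          - (∏ j, (if j ∈ s then w q j (y j) else w p j (y j)))| = 2 * |q a - p a| := by
      set h : Fin d → Bool → ℝ := fun j b =>
        if j = a then |w q a b - w p a b| else (if j ∈ s then w q j b else w p j b) with hh
      have habs : ∀ y : Fin d → Bool,
          |(∏ j, (if j ∈ insert a s then w q j (y j) else w p j (y j)))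
            - (∏ j, (if j ∈ s then w q j (y j) else w p j (y j)))| = ∏ j, h j (y j) := by
        intro y
        have hfac :
            (∏ j, (if j ∈ insert a s then w q j (y j) else w p j (y j)))
              - (∏ j, (if j ∈ s then w q j (y j) else w p j (y j)))
            = (w q a (y a) - w p a (y a)) *
              ∏ j ∈ Finset.univ.erase a, (if j ∈ s then w q j (y j) else w p j (y j)) := by
          rw [← Finset.mul_prod_erase Finset.univ
                (fun j => if j ∈ insert a s then w q j (y j) else w p j (y j))
                (Finset.mem_univ a),
              ← Finset.mul_prod_erase Finset.univ
                (fun j => if j ∈ s then w q j (y j) else w p j (y j))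
                (Finset.mem_univ a)]
          have h1 : ∀ j ∈ Finset.univ.erase a,
              (if j ∈ insert a s then w q j (y j) else w p j (y j))
                = (if j ∈ s then w q j (y j) else w p j (y j)) := by
            intro j hj
            have hne : j ≠ a := (Finset.mem_erase.mp hj).1
            simp [Finset.mem_insert, hne]
          rw [Finset.prod_congr rfl h1]
          simp [ha, sub_mul]
        rw [hfac, abs_mul]
        have hP : |∏ j ∈ Finset.univ.erase a, (if j ∈ s then w q j (y j) else w p j (y j))|
            = ∏ j ∈ Finset.univ.erase a, (if j ∈ s then w q j (y j) else w p j (y j)) := by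
          apply abs_of_nonneg
          apply Finset.prod_nonneg
          intro j _
          by_cases hjs : j ∈ s <;> simp [hjs, (w_mem hq j (y j)).1, (w_mem hp j (y j)).1]
        rw [hP, ← Finset.mul_prod_erase Finset.univ (fun j => h j (y j)) (Finset.mem_univ a)]
        congr 1
        · simp [hh]
        · apply Finset.prod_congr rfl
          intro j hj
          have hne : j ≠ a := (Finset.mem_erase.mp hj).1
          simp [hh, hne]
      calc ∑ y : Fin d → Bool,
            |(∏ j, (if j ∈ insert a s then w q j (y j) else w p j (y j)))
              - (∏ j, (if j ∈ s then w q j (y j) else w p j (y j)))|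
          = ∑ y : Fin d → Bool, ∏ j, h j (y j) := by
            exact Finset.sum_congr rfl (fun y _ => habs y)
        _ = ∏ j, (h j false + h j true) := sum_prod_bool h
        _ = 2 * |q a - p a| := by
            rw [← Finset.mul_prod_erase Finset.univ (fun j => h j false + h j true)
                  (Finset.mem_univ a)]
            have h1 : ∀ j ∈ Finset.univ.erase a, h j false + h j true = 1 := by
              intro j hj
              have hne : j ≠ a := (Finset.mem_erase.mp hj).1
              by_cases hjs : j ∈ s <;> simp [hh, hne, hjs, w]
            rw [Finset.prod_congr rfl h1]
            simp only [Finset.prod_const_one, mul_one, hh, if_pos rfl]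
            have e1 : |w q a false - w p a false| = |q a - p a| := by
              have : w q a false - w p a false = -(q a - p a) := by
                simp only [w]; norm_num
              rw [this, abs_neg]
            have e2 : |w q a true - w p a true| = |q a - p a| := by
              have : w q a true - w p a true = q a - p a := by
                simp only [w]; norm_num
              rw [this]
            rw [e1, e2]; ring
    have htri : ∑ y : Fin d → Bool,
        |(∏ j, (if j ∈ insert a s then w q j (y j) else w p j (y j))) - bw p y|
        ≤ (∑ y : Fin d → Bool,
            |(∏ j, (if j ∈ insert a s then w q j (y j) else w p j (y j)))
              - (∏ j, (if j ∈ s then w q j (y j) else w p j (y j)))|)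
          + ∑ y : Fin d → Bool,
            |(∏ j, (if j ∈ s then w q j (y j) else w p j (y j))) - bw p y| := by
      rw [← Finset.sum_add_distrib]
      apply Finset.sum_le_sum
      intro y _
      exact abs_sub_le _ _ _
    rw [Finset.sum_insert ha]
    calc ∑ y : Fin d → Bool,
          |(∏ j, (if j ∈ insert a s then w q j (y j) else w p j (y j))) - bw p y|
        ≤ 2 * |q a - p a| + ∑ y : Fin d → Bool,
            |(∏ j, (if j ∈ s then w q j (y j) else w p j (y j))) - bw p y| := by
          rw [← hAB]; exact htri
      _ ≤ 2 * |q a - p a| + 2 * ∑ j ∈ s, |q j - p j| := by linarith [ih]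
      _ = 2 * (|q a - p a| + ∑ j ∈ s, |q j - p j|) := by ring

lemma bw_l1 {d : ℕ} (p q : Fin d → ℝ)
    (hp : ∀ j, p j ∈ Set.Icc (0:ℝ) 1) (hq : ∀ j, q j ∈ Set.Icc (0:ℝ) 1) :
    ∑ y : Fin d → Bool, |bw q y - bw p y| ≤ 2 * ∑ j, |q j - p j| := by
  have := hybrid_bound p q hp hq Finset.univ
  simpa [bw_eq] using this

lemma ratio_mem {d : ℕ} (γ : ℝ) (hγ : 0 ≤ γ) (v y : Fin d → Bool) :
    (2 * ((Finset.univ.filter (fun j => v j = true ∧ y j = true)).card : ℝ) + γ) /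
      ((cnt y : ℝ) + (cnt v : ℝ) + γ) ∈ Set.Icc (0:ℝ) 1 := by
  classical
  set n : ℝ := 2 * ((Finset.univ.filter (fun j => v j = true ∧ y j = true)).card : ℝ) + γ
  set m : ℝ := (cnt y : ℝ) + (cnt v : ℝ) + γ
  have hn : 0 ≤ n := by positivity
  have hm : 0 ≤ m := by positivity
  have hnm : n ≤ m := by
    have h1 : (Finset.univ.filter (fun j => v j = true ∧ y j = true)).card ≤ cnt y := by
      apply Finset.card_le_card
      intro j hj
      simp only [Finset.mem_filter, Finset.mem_univ, true_and] at hj ⊢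
      exact hj.2
    have h2 : (Finset.univ.filter (fun j => v j = true ∧ y j = true)).card ≤ cnt v := by
      apply Finset.card_le_card
      intro j hj
      simp only [Finset.mem_filter, Finset.mem_univ, true_and] at hj ⊢
      exact hj.1
    have h1' : ((Finset.univ.filter (fun j => v j = true ∧ y j = true)).card : ℝ) ≤ (cnt y : ℝ) :=
      Nat.cast_le.mpr h1
    have h2' : ((Finset.univ.filter (fun j => v j = true ∧ y j = true)).card : ℝ) ≤ (cnt v : ℝ) :=
      Nat.cast_le.mpr h2
    simp only [n, m]; linarith
  constructor
  · exact div_nonneg hn hm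
  · rcases eq_or_lt_of_le hm with h0 | h0
    · rw [← h0, div_zero]; norm_num
    · exact (div_le_one h0).mpr hnm

/-- **L1-stability of the Dice score in the success probabilities.** For every `γ ≥ 0`
there is a constant `C > 0` depending only on `γ` such that for all `d ≥ 1`, all
probability vectors `p, q ∈ [0,1]^d` and every `v ∈ {0,1}^d`,
`|Dice_γ(v; q) - Dice_γ(v; p)| ≤ C Σⱼ |qⱼ - pⱼ|`. -/
theorem dice_l1_stability (γ : ℝ) (hγ : 0 ≤ γ) :
    ∃ C : ℝ, 0 < C ∧ ∀ d : ℕ, 1 ≤ d → ∀ p q : Fin d → ℝ,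
      (∀ j, p j ∈ Set.Icc (0 : ℝ) 1) → (∀ j, q j ∈ Set.Icc (0 : ℝ) 1) →
      ∀ v : Fin d → Bool,
        |dice γ q v - dice γ p v| ≤ C * ∑ j, |q j - p j| := by
  refine ⟨2, by norm_num, fun d _ p q hp hq v => ?_⟩
  classical
  set R : (Fin d → Bool) → ℝ := fun y =>
    (2 * ((Finset.univ.filter (fun j => v j = true ∧ y j = true)).card : ℝ) + γ) /
      ((cnt y : ℝ) + (cnt v : ℝ) + γ) with hR
  have hdiff : dice γ q v - dice γ p v = ∑ y : Fin d → Bool, (bw q y - bw p y) * R y := by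
    simp only [dice, hR, ← Finset.sum_sub_distrib, sub_mul]
  rw [hdiff]
  calc |∑ y : Fin d → Bool, (bw q y - bw p y) * R y|
      ≤ ∑ y : Fin d → Bool, |(bw q y - bw p y) * R y| := Finset.abs_sum_le_sum_abs _ _
    _ ≤ ∑ y : Fin d → Bool, |bw q y - bw p y| := by
        apply Finset.sum_le_sum
        intro y _
        rw [abs_mul]
        have hRy := ratio_mem γ hγ v y
        have : |R y| ≤ 1 := by
          rw [abs_of_nonneg hRy.1]; exact hRy.2
        calc |bw q y - bw p y| * |R y| ≤ |bw q y - bw p y| * 1 :=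
              mul_le_mul_of_nonneg_left this (abs_nonneg _)
          _ = |bw q y - bw p y| := mul_one _
    _ ≤ 2 * ∑ j, |q j - p j| := bw_l1 p q hp hq
end

section
/- Let γ ≥ 0 and v ∈ {0,1}^d with ‖v‖₁ + γ > 0, and let I(v) = {j : v_j = 1} and τ = ‖v‖₁. Then the IoU score factorizes as IoU_γ(v; p) = (Σ_{j∈I(v)} p_j + γ) · E[ 1/(Γ_{∖I(v)} + τ + γ) ], where Γ_{∖I(v)} = Σ_{j∉I(v)} Y_j. -/
open Finset

/-- The IoU score
`IoU_γ(v; p) = E[(Σⱼ vⱼYⱼ + γ)/(Σⱼ Yⱼ + Σⱼ vⱼ - Σⱼ vⱼYⱼ + γ)]`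
for independent Bernoulli `Yⱼ` with success probabilities `pⱼ` (convention 0/0 = 0). -/
noncomputable def iou {d : ℕ} (γ : ℝ) (p : Fin d → ℝ) (v : Fin d → Bool) : ℝ :=
  ∑ y : Fin d → Bool, bw p y *
    ((((Finset.univ.filter (fun j => v j = true ∧ y j = true)).card : ℝ) + γ) /
      ((cnt y : ℝ) + (cnt v : ℝ) -
        ((Finset.univ.filter (fun j => v j = true ∧ y j = true)).card : ℝ) + γ))

lemma bw_update {d : ℕ} (p : Fin d → ℝ) (j : Fin d) (y : Fin d → Bool) (b : Bool) :
    bw p (Function.update y j b)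
      = (if b = true then p j else 1 - p j) *
        ∏ k ∈ Finset.univ.erase j, (if y k = true then p k else 1 - p k) := by
  unfold bw
  rw [← Finset.mul_prod_erase Finset.univ _ (Finset.mem_univ j)]
  congr 1
  · simp
  · exact Finset.prod_congr rfl fun k hk => by
      rw [Function.update_of_ne (Finset.ne_of_mem_erase hk)]

/-- Key independence lemma: if `F` does not depend on coordinate `j`, then the indicator of
coordinate `j` integrates out to `p j`. -/
lemma bw_key {d : ℕ} (p : Fin d → ℝ) (j : Fin d) (F : (Fin d → Bool) → ℝ)
    (hF : ∀ y b, F (Function.update y j b) = F y) :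
    ∑ y : Fin d → Bool, (if y j = true then (1 : ℝ) else 0) * (bw p y * F y)
      = p j * ∑ y : Fin d → Bool, bw p y * F y := by
  classical
  set e := Equiv.funSplitAt j Bool with he
  have hsplit : ∀ (g : (Fin d → Bool) → ℝ), ∑ y : Fin d → Bool, g y
      = ∑ f : { k : Fin d // k ≠ j } → Bool,
          (g (e.symm (true, f)) + g (e.symm (false, f))) := by
    intro g
    rw [← Equiv.sum_comp e.symm g, Fintype.sum_prod_type, Fintype.sum_bool,
      ← Finset.sum_add_distrib]
  have hsymm : ∀ (b : Bool) (f : { k : Fin d // k ≠ j } → Bool),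
      e.symm (b, f) = Function.update (e.symm (true, f)) j b := by
    intro b f
    funext k
    by_cases hk : k = j
    · subst hk
      simp [he, Equiv.funSplitAt_symm_apply]
    · simp [he, Equiv.funSplitAt_symm_apply, hk, Function.update_of_ne hk]
  have hj : ∀ (b : Bool) (f : { k : Fin d // k ≠ j } → Bool), e.symm (b, f) j = b := by
    intro b f
    rw [hsymm]
    simp
  rw [hsplit, hsplit (fun y => bw p y * F y), Finset.mul_sum]
  apply Finset.sum_congr rfl
  intro f _
  have h1 : e.symm ((true : Bool), f) j = true := hj true f
  have h0 : e.symm ((false : Bool), f) j = false := hj false f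
  have hFeq : F (e.symm (false, f)) = F (e.symm (true, f)) := by
    rw [hsymm false f, hF]
  have hb1 : bw p (e.symm (true, f))
      = p j * ∏ k ∈ Finset.univ.erase j,
          (if (e.symm ((true : Bool), f)) k = true then p k else 1 - p k) := by
    conv_lhs => rw [hsymm true f]
    rw [bw_update]
    simp
  have hb0 : bw p (e.symm (false, f))
      = (1 - p j) * ∏ k ∈ Finset.univ.erase j,
          (if (e.symm ((true : Bool), f)) k = true then p k else 1 - p k) := by
    rw [hsymm false f, bw_update]
    simp
  rw [h1, h0, hFeq, hb1, hb0]
  simp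
  ring

/-- **IoU factorization.** For `γ ≥ 0` and `v ∈ {0,1}^d` with `‖v‖₁ + γ > 0`,
`IoU_γ(v; p) = (Σ_{j ∈ I(v)} pⱼ + γ) · E[1/(Γ_{∖I(v)} + τ + γ)]`, where `τ = ‖v‖₁`
and `Γ_{∖I(v)} = Σ_{j ∉ I(v)} Yⱼ`. -/
theorem iou_factorization {d : ℕ} (γ : ℝ) (hγ : 0 ≤ γ) (p : Fin d → ℝ)
    (hp : ∀ j, p j ∈ Set.Icc (0 : ℝ) 1) (v : Fin d → Bool)
    (hv : 0 < (cnt v : ℝ) + γ) :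
    iou γ p v =
      ((∑ j ∈ Finset.univ.filter (fun j => v j = true), p j) + γ) *
        ∑ y : Fin d → Bool, bw p y *
          (1 / (((Finset.univ.filter (fun j => v j = false ∧ y j = true)).card : ℝ) +
            (cnt v : ℝ) + γ)) := by
  classical
  set Iv := Finset.univ.filter (fun j => v j = true) with hIv
  -- abbreviations
  set G : (Fin d → Bool) → ℝ := fun y =>
    1 / (((Finset.univ.filter (fun j => v j = false ∧ y j = true)).card : ℝ) +
      (cnt v : ℝ) + γ) with hG
  -- cardinality splitting
  have hcard : ∀ y : Fin d → Bool,
      (Finset.univ.filter (fun j => v j = true ∧ y j = true)).card +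
        (Finset.univ.filter (fun j => v j = false ∧ y j = true)).card = cnt y := by
    intro y
    unfold cnt
    have h1 : Finset.univ.filter (fun j => v j = true ∧ y j = true)
        = (Finset.univ.filter (fun j => y j = true)).filter (fun j => v j = true) := by
      rw [Finset.filter_filter]
      exact Finset.filter_congr fun j _ => by tauto
    have h2 : Finset.univ.filter (fun j => v j = false ∧ y j = true)
        = (Finset.univ.filter (fun j => y j = true)).filter (fun j => ¬ (v j = true)) := by
      rw [Finset.filter_filter]
      apply Finset.filter_congr
      intro j _
      simp only [Bool.not_eq_true]
      tauto
    rw [h1, h2, Finset.card_filter_add_card_filter_not]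
  -- numerator as a sum of indicators
  have hnum : ∀ y : Fin d → Bool,
      ((Finset.univ.filter (fun j => v j = true ∧ y j = true)).card : ℝ)
        = ∑ j ∈ Iv, (if y j = true then (1 : ℝ) else 0) := by
    intro y
    rw [Finset.sum_boole, hIv, Finset.filter_filter]
  -- rewrite each summand of iou
  have hsummand : ∀ y : Fin d → Bool,
      bw p y *
        ((((Finset.univ.filter (fun j => v j = true ∧ y j = true)).card : ℝ) + γ) /
          ((cnt y : ℝ) + (cnt v : ℝ) -
            ((Finset.univ.filter (fun j => v j = true ∧ y j = true)).card : ℝ) + γ))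
      = (∑ j ∈ Iv, (if y j = true then (1 : ℝ) else 0) * (bw p y * G y))
          + γ * (bw p y * G y) := by
    intro y
    have hden : (cnt y : ℝ) + (cnt v : ℝ) -
        ((Finset.univ.filter (fun j => v j = true ∧ y j = true)).card : ℝ) + γ
        = ((Finset.univ.filter (fun j => v j = false ∧ y j = true)).card : ℝ) +
          (cnt v : ℝ) + γ := by
      have := hcard y
      have h' : ((Finset.univ.filter (fun j => v j = true ∧ y j = true)).card : ℝ) +
          ((Finset.univ.filter (fun j => v j = false ∧ y j = true)).card : ℝ) = (cnt y : ℝ) := by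
        exact_mod_cast congrArg (Nat.cast : ℕ → ℝ) this
      linarith
    rw [hden, hG]
    rw [hnum y, div_eq_mul_one_div]
    rw [← Finset.sum_mul]
    ring
  unfold iou
  rw [Finset.sum_congr rfl fun y _ => hsummand y]
  rw [Finset.sum_add_distrib, Finset.sum_comm]
  have hkey : ∀ j ∈ Iv,
      ∑ y : Fin d → Bool, (if y j = true then (1 : ℝ) else 0) * (bw p y * G y)
        = p j * ∑ y : Fin d → Bool, bw p y * G y := by
    intro j hj
    have hvj : v j = true := by
      rw [hIv] at hj
      simpa using hj
    apply bw_key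
    intro y b
    have : Finset.univ.filter (fun k => v k = false ∧ (Function.update y j b) k = true)
        = Finset.univ.filter (fun k => v k = false ∧ y k = true) := by
      apply Finset.filter_congr
      intro k _
      by_cases hk : k = j
      · subst hk; simp [hvj]
      · rw [Function.update_of_ne hk]
    rw [hG]
    simp only [this]
  rw [Finset.sum_congr rfl hkey, ← Finset.sum_mul]
  simp only [hG, one_div, mul_assoc, ← Finset.mul_sum]
  ring
end

section
/- Assume γ ≥ 0 and that p_1, …, p_d are pairwise distinct. For τ ∈ {0,…,d} let J_τ be the set of indices of the τ largest values among p_1, …, p_d (with J_0 = ∅), and define ϖ(τ) = (Σ_{j∈J_τ} p_j + γ) · Σ_{l=0}^{d−τ} P(Γ_{∖J_τ} = l)/(τ + l + γ), with the convention x/0 := 0 (which only arises when τ = l = γ = 0). Then a vector v ∈ {0,1}^d is a maximizer of v ↦ IoU_γ(v; p) over {0,1}^d if and only if v is the indicator vector of J_{τ*} for some τ* maximizing ϖ over {0, 1, …, d}. -/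
open Finset

/-- The IoU volume score
`ϖ(τ) = (Σ_{j ∈ J_τ} pⱼ + γ) · Σ_{l=0}^{d-τ} P(Γ_{∖J_τ} = l)/(τ + l + γ)`
(the convention `x/0 := 0`, arising only when `τ = l = γ = 0`, is Lean's division). -/
noncomputable def iouScore {d : ℕ} (γ : ℝ) (p : Fin d → ℝ) (τ : ℕ) : ℝ :=
  ((∑ j ∈ topIdx p τ, p j) + γ) *
    ∑ l ∈ Finset.range (d - τ + 1),
      pmfOn (Finset.univ \ topIdx p τ) p l / ((τ : ℝ) + (l : ℝ) + γ)

namespace IoUAux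
variable {d : ℕ}

noncomputable def wt (p : Fin d → ℝ) (S A : Finset (Fin d)) : ℝ :=
  (∏ j ∈ A, p j) * ∏ j ∈ S \ A, (1 - p j)

lemma wt_nonneg {p : Fin d → ℝ} (hp : ∀ j, p j ∈ Set.Icc (0:ℝ) 1) (S A : Finset (Fin d)) :
    0 ≤ wt p S A :=
  mul_nonneg (prod_nonneg fun j _ => (hp j).1)
    (prod_nonneg fun j _ => by have := (hp j).2; linarith)

lemma wt_insert_notmem (p : Fin d → ℝ) {a : Fin d} {S A : Finset (Fin d)}
    (haS : a ∉ S) (hA : A ⊆ S) :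
    wt p (insert a S) A = (1 - p a) * wt p S A := by
  have haA : a ∉ A := fun h => haS (hA h)
  have h1 : (insert a S) \ A = insert a (S \ A) := by
    ext j; simp only [mem_sdiff, mem_insert]; constructor
    · rintro ⟨h | h, h2⟩
      · exact Or.inl h
      · exact Or.inr ⟨h, h2⟩
    · rintro (rfl | ⟨h, h2⟩)
      · exact ⟨Or.inl rfl, haA⟩
      · exact ⟨Or.inr h, h2⟩
  have haSA : a ∉ S \ A := fun h => haS (mem_sdiff.mp h).1
  rw [wt, wt, h1, prod_insert haSA]; ring

lemma wt_insert_mem (p : Fin d → ℝ) {a : Fin d} {S A : Finset (Fin d)}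
    (haS : a ∉ S) (hA : A ⊆ S) :
    wt p (insert a S) (insert a A) = p a * wt p S A := by
  have haA : a ∉ A := fun h => haS (hA h)
  have h1 : (insert a S) \ (insert a A) = S \ A := by
    ext j; simp only [mem_sdiff, mem_insert]; constructor
    · rintro ⟨h | h, h2⟩
      · exact absurd (Or.inl h) h2
      · exact ⟨h, fun hc => h2 (Or.inr hc)⟩
    · rintro ⟨h, h2⟩
      refine ⟨Or.inr h, ?_⟩
      rintro (rfl | hc)
      · exact haS h
      · exact h2 hc
  rw [wt, wt, h1, prod_insert haA]; ring

lemma sum_wt (p : Fin d → ℝ) (S : Finset (Fin d)) :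
    ∑ A ∈ S.powerset, wt p S A = 1 := by
  classical
  induction S using Finset.induction_on with
  | empty => simp [wt]
  | insert a s ha ih =>
    rw [Finset.sum_powerset_insert ha,
      Finset.sum_congr rfl (fun A hA => wt_insert_notmem p ha (mem_powerset.mp hA)),
      Finset.sum_congr rfl (fun A hA => wt_insert_mem p ha (mem_powerset.mp hA)),
      ← mul_sum, ← mul_sum, ih]
    ring

lemma sum_wt_mul_card (p : Fin d → ℝ) (S : Finset (Fin d)) :
    ∑ A ∈ S.powerset, wt p S A * (A.card : ℝ) = ∑ j ∈ S, p j := by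
  classical
  induction S using Finset.induction_on with
  | empty => simp [wt]
  | insert a s ha ih =>
    rw [Finset.sum_powerset_insert ha, sum_insert ha]
    have e1 : ∀ A ∈ s.powerset, wt p (insert a s) A * (A.card : ℝ)
        = (1 - p a) * (wt p s A * A.card) := by
      intro A hA; rw [wt_insert_notmem p ha (mem_powerset.mp hA)]; ring
    have e2 : ∀ A ∈ s.powerset, wt p (insert a s) (insert a A) * ((insert a A).card : ℝ)
        = p a * (wt p s A * A.card) + p a * wt p s A := by
      intro A hA
      have haA : a ∉ A := fun h => ha (mem_powerset.mp hA h)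
      rw [wt_insert_mem p ha (mem_powerset.mp hA), card_insert_of_notMem haA]
      push_cast; ring
    rw [Finset.sum_congr rfl e1, Finset.sum_congr rfl e2, ← mul_sum, sum_add_distrib,
      ← mul_sum, ← mul_sum, ih, sum_wt]
    ring



noncomputable def QQ (p : Fin d → ℝ) (S : Finset (Fin d)) (l : ℕ) : ℝ :=
  ∑ A ∈ S.powersetCard l, wt p S A

lemma sum_wt_mul (p : Fin d → ℝ) (S : Finset (Fin d)) (h : ℕ → ℝ) :
    ∑ A ∈ S.powerset, wt p S A * h A.card
      = ∑ l ∈ Finset.range (S.card + 1), QQ p S l * h l := by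
  rw [Finset.sum_powerset]
  refine Finset.sum_congr rfl fun l _ => ?_
  rw [QQ, Finset.sum_mul]
  exact Finset.sum_congr rfl fun A hA => by rw [(Finset.mem_powersetCard.mp hA).2]

/-- Reindex a sum over boolean vectors as a sum over finsets. -/
lemma sum_bool_eq (G : Finset (Fin d) → ℝ) :
    ∑ y : Fin d → Bool, G (Finset.univ.filter fun j => y j = true)
      = ∑ Y : Finset (Fin d), G Y := by
  classical
  exact Equiv.sum_comp
    (⟨fun y => Finset.univ.filter fun j => y j = true,
      fun Y j => decide (j ∈ Y),
      fun y => by funext j; simp,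
      fun Y => by ext j; simp⟩ : (Fin d → Bool) ≃ Finset (Fin d)) G

lemma sum_powerset_union {S₁ S₂ : Finset (Fin d)} (hdis : Disjoint S₁ S₂)
    (F : Finset (Fin d) → ℝ) :
    ∑ Y ∈ (S₁ ∪ S₂).powerset, F Y
      = ∑ A ∈ S₁.powerset, ∑ B ∈ S₂.powerset, F (A ∪ B) := by
  classical
  induction S₁ using Finset.induction_on generalizing F with
  | empty => simp
  | insert a s ha ih =>
    have haS₂ : a ∉ S₂ := fun h =>
      (Finset.disjoint_left.mp hdis (mem_insert_self a s)) h
    have hdis' : Disjoint s S₂ :=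
      hdis.mono_left (Finset.subset_insert a s)
    have haU : a ∉ s ∪ S₂ := by simp [ha, haS₂]
    rw [Finset.insert_union, Finset.sum_powerset_insert haU,
      Finset.sum_powerset_insert ha, ih hdis' F, ih hdis' (fun Y => F (insert a Y))]
    congr 1
    refine Finset.sum_congr rfl fun A _ => Finset.sum_congr rfl fun B _ => ?_
    rw [Finset.insert_union]

lemma wt_union (p : Fin d → ℝ) {S₁ S₂ A B : Finset (Fin d)} (hdis : Disjoint S₁ S₂)
    (hA : A ⊆ S₁) (hB : B ⊆ S₂) :
    wt p (S₁ ∪ S₂) (A ∪ B) = wt p S₁ A * wt p S₂ B := by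
  have hdAB : Disjoint A B := hdis.mono hA hB
  have h12 : ∀ j, j ∈ S₁ → j ∉ S₂ := fun j h => Finset.disjoint_left.mp hdis h
  have h2 : (S₁ ∪ S₂) \ (A ∪ B) = (S₁ \ A) ∪ (S₂ \ B) := by
    ext j
    simp only [mem_sdiff, mem_union, not_or]
    constructor
    · rintro ⟨h | h, h2, h3⟩
      · exact Or.inl ⟨h, h2⟩
      · exact Or.inr ⟨h, h3⟩
    · rintro (⟨h, hna⟩ | ⟨h, hnb⟩)
      · exact ⟨Or.inl h, hna, fun hb => h12 j h (hB hb)⟩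
      · exact ⟨Or.inr h, fun hA2 => h12 j (hA hA2) h, hnb⟩
  rw [wt, wt, wt, Finset.prod_union hdAB, h2,
    Finset.prod_union (hdis.mono sdiff_subset sdiff_subset)]
  ring



lemma pmfOn_eq (p : Fin d → ℝ) (S : Finset (Fin d)) (l : ℕ) :
    pmfOn S p l = QQ p S l := by
  classical
  have step1 : pmfOn S p l
      = ∑ Y : Finset (Fin d), (if Y ⊆ S ∧ Y.card = l then wt p S Y else 0) := by
    rw [← sum_bool_eq]
    refine Finset.sum_congr rfl fun y _ => ?_
    set Y := Finset.univ.filter fun j => y j = true with hY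
    by_cases hsub : Y ⊆ S
    · have hfil : S.filter (fun j => y j = true) = Y := by
        ext j
        simp only [hY, mem_filter, mem_univ, true_and]
        exact ⟨fun h => h.2, fun h => ⟨hsub (by simp [hY, h]), h⟩⟩
      have hcond1 : ∀ j, j ∉ S → y j = false := by
        intro j hj
        by_contra h
        exact hj (hsub (by simp [hY, Bool.not_eq_false] at h ⊢; exact h))
      by_cases hcard : Y.card = l
      · rw [if_pos ⟨hcond1, by rw [hfil]; exact hcard⟩, if_pos ⟨hsub, hcard⟩]
        rw [Finset.prod_ite, wt, hfil]
        congr 1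
        rw [Finset.filter_not, hfil]
      · rw [if_neg (by rw [hfil]; exact fun hc => hcard hc.2),
          if_neg (fun hc => hcard hc.2)]
    · have hnc : ¬ (∀ j, j ∉ S → y j = false) := by
        intro hc
        apply hsub
        intro j hj
        simp only [hY, mem_filter, mem_univ, true_and] at hj
        by_contra hjS
        rw [hc j hjS] at hj
        exact Bool.false_ne_true hj
      rw [if_neg (fun hcc => hnc hcc.1), if_neg (fun hcc => hsub hcc.1)]
  rw [step1, ← Finset.sum_filter, QQ]
  apply Finset.sum_congr
  · ext Y; simp [Finset.mem_powersetCard]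
  · intros; rfl



noncomputable def score (γ : ℝ) (p : Fin d → ℝ) (J : Finset (Fin d)) : ℝ :=
  ((∑ j ∈ J, p j) + γ) * ∑ l ∈ Finset.range (d - J.card + 1),
      pmfOn (Finset.univ \ J) p l / ((J.card : ℝ) + (l : ℝ) + γ)

lemma iou_eq_score (γ : ℝ) (p : Fin d → ℝ) (J : Finset (Fin d)) :
    iou γ p (fun j => decide (j ∈ J)) = score γ p J := by
  classical
  have hcv : cnt (fun j => decide (j ∈ J)) = J.card := by
    unfold cnt; congr 1; ext j; simp
  have step1 : iou γ p (fun j => decide (j ∈ J))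
      = ∑ Y : Finset (Fin d), (wt p Finset.univ Y *
          ((((J ∩ Y).card : ℝ) + γ) /
            ((Y.card : ℝ) + (J.card : ℝ) - ((J ∩ Y).card : ℝ) + γ))) := by
    rw [iou, ← sum_bool_eq]
    refine Finset.sum_congr rfl fun y _ => ?_
    have h1 : Finset.univ.filter (fun j => (decide (j ∈ J)) = true ∧ y j = true)
        = J ∩ (Finset.univ.filter fun j => y j = true) := by
      ext j; simp [mem_inter]
    have h2 : bw p y = wt p Finset.univ (Finset.univ.filter fun j => y j = true) := by
      rw [bw, wt, Finset.prod_ite, Finset.filter_not]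
    have h3 : cnt y = (Finset.univ.filter fun j => y j = true).card := rfl
    rw [h1, h2, hcv, h3]
  rw [step1]
  have hu : (Finset.univ : Finset (Fin d)) = J ∪ (Finset.univ \ J) :=
    (Finset.union_sdiff_of_subset (Finset.subset_univ J)).symm
  have step2 : ∑ Y : Finset (Fin d), (wt p Finset.univ Y *
          ((((J ∩ Y).card : ℝ) + γ) /
            ((Y.card : ℝ) + (J.card : ℝ) - ((J ∩ Y).card : ℝ) + γ)))
      = ∑ A ∈ J.powerset, ∑ B ∈ (Finset.univ \ J).powerset,
          (wt p Finset.univ (A ∪ B) *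
          ((((J ∩ (A ∪ B)).card : ℝ) + γ) /
            (((A ∪ B).card : ℝ) + (J.card : ℝ) - ((J ∩ (A ∪ B)).card : ℝ) + γ))) := by
    have h := sum_powerset_union (Finset.disjoint_sdiff (s := J) (t := Finset.univ))
      (fun Y => wt p Finset.univ Y *
          ((((J ∩ Y).card : ℝ) + γ) /
            ((Y.card : ℝ) + (J.card : ℝ) - ((J ∩ Y).card : ℝ) + γ)))
    rw [← hu, Finset.powerset_univ] at h
    exact h
  rw [step2]
  have hterm : ∀ A ∈ J.powerset, ∀ B ∈ (Finset.univ \ J).powerset,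
      (wt p Finset.univ (A ∪ B) *
          ((((J ∩ (A ∪ B)).card : ℝ) + γ) /
            (((A ∪ B).card : ℝ) + (J.card : ℝ) - ((J ∩ (A ∪ B)).card : ℝ) + γ)))
      = (wt p J A * ((A.card : ℝ) + γ)) *
        (wt p (Finset.univ \ J) B * (((J.card : ℝ) + (B.card : ℝ) + γ)⁻¹)) := by
    intro A hA B hB
    have hA' : A ⊆ J := Finset.mem_powerset.mp hA
    have hB' : B ⊆ Finset.univ \ J := Finset.mem_powerset.mp hB
    have hAB : Disjoint A B := Finset.disjoint_sdiff.mono hA' hB'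
    have hwt : wt p Finset.univ (A ∪ B) = wt p J A * wt p (Finset.univ \ J) B := by
      have := wt_union p Finset.disjoint_sdiff hA' hB'
      rwa [Finset.union_sdiff_of_subset (Finset.subset_univ J)] at this
    have hJint : J ∩ (A ∪ B) = A := by
      ext j
      simp only [mem_inter, mem_union]
      constructor
      · rintro ⟨hj, hj2 | hj2⟩
        · exact hj2
        · exact absurd hj (Finset.mem_sdiff.mp (hB' hj2)).2
      · exact fun hj => ⟨hA' hj, Or.inl hj⟩
    have hcard : (((A ∪ B).card) : ℝ) = (A.card : ℝ) + (B.card : ℝ) := by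
      rw [Finset.card_union_of_disjoint hAB]; push_cast; ring
    rw [hJint, hwt, hcard]
    have hden : (A.card : ℝ) + (B.card : ℝ) + (J.card : ℝ) - (A.card : ℝ) + γ
        = (J.card : ℝ) + (B.card : ℝ) + γ := by ring
    rw [hden, div_eq_mul_inv]
    ring
  rw [Finset.sum_congr rfl fun A hA => Finset.sum_congr rfl fun B hB => hterm A hA B hB,
    ← Finset.sum_mul_sum]
  have hf1 : ∑ A ∈ J.powerset, wt p J A * ((A.card : ℝ) + γ) = (∑ j ∈ J, p j) + γ := by
    rw [Finset.sum_congr rfl (fun A _ => by ring :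
        ∀ A ∈ J.powerset, wt p J A * ((A.card : ℝ) + γ)
          = wt p J A * (A.card : ℝ) + wt p J A * γ),
      Finset.sum_add_distrib, sum_wt_mul_card, ← Finset.sum_mul, sum_wt, one_mul]
  have hf2 : ∑ B ∈ (Finset.univ \ J).powerset,
        wt p (Finset.univ \ J) B * (((J.card : ℝ) + (B.card : ℝ) + γ)⁻¹)
      = ∑ l ∈ Finset.range (d - J.card + 1),
          pmfOn (Finset.univ \ J) p l / ((J.card : ℝ) + (l : ℝ) + γ) := by
    have hc : (Finset.univ \ J).card = d - J.card := by
      rw [Finset.card_sdiff_of_subset (Finset.subset_univ J), Finset.card_univ, Fintype.card_fin]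
    rw [sum_wt_mul p (Finset.univ \ J) (fun l => ((J.card : ℝ) + (l : ℝ) + γ)⁻¹), hc]
    exact Finset.sum_congr rfl fun l _ => by rw [pmfOn_eq, div_eq_mul_inv]
  rw [hf1, hf2, score]



lemma QQ_nonneg {p : Fin d → ℝ} (hp : ∀ j, p j ∈ Set.Icc (0:ℝ) 1)
    (S : Finset (Fin d)) (l : ℕ) : 0 ≤ QQ p S l :=
  Finset.sum_nonneg fun A _ => wt_nonneg hp S A

lemma sum_QQ (p : Fin d → ℝ) (S : Finset (Fin d)) :
    ∑ l ∈ Finset.range (S.card + 1), QQ p S l = 1 := by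
  have h := sum_wt_mul p S (fun _ => (1:ℝ))
  simpa [sum_wt p S] using h.symm

/-- Splitting off one coordinate of the Poisson-binomial. -/
lemma dsplit (p : Fin d → ℝ) {S : Finset (Fin d)} {b : Fin d} (hb : b ∈ S) (h : ℕ → ℝ) :
    ∑ l ∈ Finset.range (S.card + 1), QQ p S l * h l
    = (1 - p b) * (∑ m ∈ Finset.range ((S.erase b).card + 1), QQ p (S.erase b) m * h m)
      + p b * ∑ m ∈ Finset.range ((S.erase b).card + 1), QQ p (S.erase b) m * h (m + 1) := by
  classical
  rw [← sum_wt_mul, ← sum_wt_mul, ← sum_wt_mul]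
  set C := S.erase b with hC
  have hbC : b ∉ C := Finset.notMem_erase b S
  have hS : S = insert b C := (Finset.insert_erase hb).symm
  rw [hS, Finset.sum_powerset_insert hbC]
  congr 1
  · rw [Finset.mul_sum]
    refine Finset.sum_congr rfl fun A hA => ?_
    rw [wt_insert_notmem p hbC (Finset.mem_powerset.mp hA)]; ring
  · rw [Finset.mul_sum]
    refine Finset.sum_congr rfl fun A hA => ?_
    have hAC : A ⊆ C := Finset.mem_powerset.mp hA
    have hbA : b ∉ A := fun hc => hbC (hAC hc)
    rw [wt_insert_mem p hbC hAC, Finset.card_insert_of_notMem hbA]; ring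


lemma score_eq (γ : ℝ) (p : Fin d → ℝ) (J : Finset (Fin d)) :
    score γ p J = ((∑ j ∈ J, p j) + γ) *
      ∑ l ∈ Finset.range ((Finset.univ \ J).card + 1),
        QQ p (Finset.univ \ J) l * ((J.card : ℝ) + (l : ℝ) + γ)⁻¹ := by
  have hc : (Finset.univ \ J).card = d - J.card := by
    rw [Finset.card_sdiff_of_subset (Finset.subset_univ J), Finset.card_univ, Fintype.card_fin]
  rw [score, hc]
  congr 1
  exact Finset.sum_congr rfl fun l _ => by rw [pmfOn_eq, div_eq_mul_inv]

/-- The exchange lemma: swapping a smaller `p`-value out for a bigger one strictly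
increases the score. -/
lemma score_lt {γ : ℝ} (hγ : 0 ≤ γ) {p : Fin d → ℝ} (hp : ∀ j, p j ∈ Set.Icc (0:ℝ) 1)
    {J : Finset (Fin d)} {a b : Fin d} (ha : a ∈ J) (hb : b ∉ J) (hab : p a < p b) :
    score γ p J < score γ p (insert b (J.erase a)) := by
  classical
  set J' := insert b (J.erase a) with hJ'
  have hane : a ≠ b := fun h => hb (h ▸ ha)
  have hbJe : b ∉ J.erase a := fun h => hb (Finset.mem_of_mem_erase h)
  have hτ1 : 1 ≤ J.card := Finset.card_pos.mpr ⟨a, ha⟩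
  have hcard' : J'.card = J.card := by
    rw [hJ', Finset.card_insert_of_notMem hbJe, Finset.card_erase_of_mem ha]
    omega
  have hbS : b ∈ Finset.univ \ J := by simp [hb]
  have haS' : a ∈ Finset.univ \ J' := by
    simp only [Finset.mem_sdiff, Finset.mem_univ, true_and, hJ', Finset.mem_insert]
    rintro (h | h)
    · exact hane h
    · exact absurd h (Finset.notMem_erase a J)
  have hC : (Finset.univ \ J').erase a = (Finset.univ \ J).erase b := by
    ext j
    simp only [Finset.mem_erase, Finset.mem_sdiff, Finset.mem_univ, true_and, hJ',
      Finset.mem_insert, not_or, Finset.mem_erase]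
    constructor
    · rintro ⟨hja, hjb, hjJ⟩
      refine ⟨hjb, ?_⟩
      intro hjJ'
      exact (hjJ ⟨hja, hjJ'⟩).elim
    · rintro ⟨hjb, hjJ⟩
      exact ⟨fun h => hjJ (h ▸ ha), hjb, fun hc => hjJ hc.2⟩
  set C := (Finset.univ \ J).erase b with hCdef
  set B := ∑ m ∈ Finset.range (C.card + 1),
      QQ p C m * ((J.card : ℝ) + (m : ℝ) + γ)⁻¹ with hB
  set B' := ∑ m ∈ Finset.range (C.card + 1),
      QQ p C m * ((J.card : ℝ) + ((m + 1 : ℕ) : ℝ) + γ)⁻¹ with hB'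
  have hsJ : score γ p J = ((∑ j ∈ J.erase a, p j) + p a + γ) * ((1 - p b) * B + p b * B') := by
    have hsum : ∑ j ∈ J, p j = p a + ∑ j ∈ J.erase a, p j := (Finset.add_sum_erase J p ha).symm
    rw [score_eq, dsplit p hbS (fun l => ((J.card : ℝ) + (l : ℝ) + γ)⁻¹), ← hCdef,
      ← hB, ← hB', hsum]
    ring
  have hsJ' : score γ p J' = ((∑ j ∈ J.erase a, p j) + p b + γ) * ((1 - p a) * B + p a * B') := by
    have hsum : ∑ j ∈ J', p j = p b + ∑ j ∈ J.erase a, p j := Finset.sum_insert hbJe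
    rw [score_eq, dsplit p haS' (fun l => ((J'.card : ℝ) + (l : ℝ) + γ)⁻¹), hC,
      hsum, hcard', ← hB, ← hB']
    ring
  -- positivity facts
  have hpa0 : 0 ≤ p a := (hp a).1
  have hpb1 : p b ≤ 1 := (hp b).2
  have hS0 : 0 ≤ ∑ j ∈ J.erase a, p j := Finset.sum_nonneg fun j _ => (hp j).1
  have hden : ∀ m : ℕ, 0 < (J.card : ℝ) + (m : ℝ) + γ := by
    intro m
    have h1 : (1 : ℝ) ≤ (J.card : ℝ) := by exact_mod_cast hτ1
    have h2 : (0 : ℝ) ≤ (m : ℝ) := Nat.cast_nonneg m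
    linarith
  have hBpos : 0 < B := by
    have hK : 0 < ((J.card : ℝ) + (C.card : ℝ) + γ)⁻¹ := inv_pos.mpr (hden C.card)
    have hle : ((J.card : ℝ) + (C.card : ℝ) + γ)⁻¹ ≤ B := by
      calc ((J.card : ℝ) + (C.card : ℝ) + γ)⁻¹
          = ∑ m ∈ Finset.range (C.card + 1),
              QQ p C m * ((J.card : ℝ) + (C.card : ℝ) + γ)⁻¹ := by
            rw [← Finset.sum_mul, sum_QQ, one_mul]
        _ ≤ B := by
            rw [hB]
            refine Finset.sum_le_sum fun m hm => ?_
            have hm' : m ≤ C.card := by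
              have := Finset.mem_range.mp hm; omega
            refine mul_le_mul_of_nonneg_left ?_ (QQ_nonneg hp C m)
            refine inv_anti₀ (hden m) ?_
            have : (m : ℝ) ≤ (C.card : ℝ) := by exact_mod_cast hm'
            linarith
    linarith
  have hB'nonneg : 0 ≤ B' := by
    rw [hB']
    exact Finset.sum_nonneg fun m _ =>
      mul_nonneg (QQ_nonneg hp C m) (inv_nonneg.mpr (hden (m + 1)).le)
  have hB'le : B' ≤ B := by
    rw [hB, hB']
    refine Finset.sum_le_sum fun m _ => ?_
    refine mul_le_mul_of_nonneg_left ?_ (QQ_nonneg hp C m)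
    refine inv_anti₀ (hden m) ?_
    push_cast
    linarith
  rw [hsJ, hsJ']
  nlinarith [mul_pos (sub_pos.mpr hab) hBpos,
    mul_nonneg (mul_nonneg (sub_nonneg.mpr hab.le) (add_nonneg hS0 hγ)) (sub_nonneg.mpr hB'le)]



noncomputable def rnk (p : Fin d → ℝ) (j : Fin d) : ℕ :=
  (Finset.univ.filter (fun j' => p j ≤ p j')).card

lemma mem_topIdx {p : Fin d → ℝ} {τ : ℕ} {j : Fin d} :
    j ∈ topIdx p τ ↔ rnk p j ≤ τ := by
  simp [topIdx, rnk]

lemma rnk_lt_rnk {p : Fin d → ℝ} {a b : Fin d} (hab : p a < p b) :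
    rnk p b < rnk p a := by
  classical
  apply Finset.card_lt_card
  rw [Finset.ssubset_iff_subset_ne]
  constructor
  · intro j hj
    simp only [Finset.mem_filter, Finset.mem_univ, true_and] at hj ⊢
    exact le_trans hab.le hj
  · intro hc
    have ha : a ∈ Finset.univ.filter (fun j' => p a ≤ p j') := by simp
    rw [← hc] at ha
    simp only [Finset.mem_filter] at ha
    exact absurd ha.2 (not_le.mpr hab)

lemma p_lt_of_mem_notmem {p : Fin d → ℝ} (hdist : Function.Injective p) {τ : ℕ} {a b : Fin d}
    (ha : a ∉ topIdx p τ) (hb : b ∈ topIdx p τ) : p a < p b := by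
  rcases lt_trichotomy (p a) (p b) with h | h | h
  · exact h
  · exact absurd (hdist h) (fun hc => ha (hc ▸ hb))
  · exact absurd (mem_topIdx.mpr ((rnk_lt_rnk h).le.trans (mem_topIdx.mp hb))) ha

lemma rnk_injective {p : Fin d → ℝ} (hdist : Function.Injective p) :
    Function.Injective (rnk p) := by
  intro a b h
  by_contra hne
  rcases lt_trichotomy (p a) (p b) with hlt | heq | hgt
  · exact absurd h (rnk_lt_rnk hlt).ne'
  · exact hne (hdist heq)
  · exact absurd h (rnk_lt_rnk hgt).ne

lemma card_topIdx {p : Fin d → ℝ} (hdist : Function.Injective p) {τ : ℕ} (hτ : τ ≤ d) :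
    (topIdx p τ).card = τ := by
  classical
  have hinj := rnk_injective hdist
  have himg : Finset.image (rnk p) Finset.univ = Finset.Icc 1 d := by
    apply Finset.eq_of_subset_of_card_le
    · intro n hn
      obtain ⟨j, _, rfl⟩ := Finset.mem_image.mp hn
      rw [Finset.mem_Icc]
      constructor
      · have : j ∈ Finset.univ.filter (fun j' => p j ≤ p j') := by simp
        exact Finset.card_pos.mpr ⟨j, this⟩
      · calc rnk p j ≤ Finset.univ.card := Finset.card_filter_le _ _
          _ = d := by rw [Finset.card_univ, Fintype.card_fin]
    · rw [Nat.card_Icc, Finset.card_image_of_injective _ hinj, Finset.card_univ,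
        Fintype.card_fin]
      omega
  have h1 : topIdx p τ = Finset.univ.filter (fun j => rnk p j ≤ τ) := rfl
  calc (topIdx p τ).card
      = ((Finset.univ.filter (fun j => rnk p j ≤ τ)).image (rnk p)).card := by
        rw [Finset.card_image_of_injective _ hinj, h1]
    _ = ((Finset.univ.image (rnk p)).filter (fun n => n ≤ τ)).card := by
        rw [Finset.filter_image]
    _ = ((Finset.Icc 1 d).filter (fun n => n ≤ τ)).card := by rw [himg]
    _ = (Finset.Icc 1 τ).card := by
        congr 1; ext n; simp only [Finset.mem_filter, Finset.mem_Icc]; omega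
    _ = τ := by rw [Nat.card_Icc]; omega



lemma iouScore_eq_score {γ : ℝ} {p : Fin d → ℝ} (hdist : Function.Injective p)
    {τ : ℕ} (hτ : τ ≤ d) : iouScore γ p τ = score γ p (topIdx p τ) := by
  rw [iouScore, score, card_topIdx hdist hτ]

lemma card_le_d (J : Finset (Fin d)) : J.card ≤ d := by
  calc J.card ≤ Finset.univ.card := Finset.card_le_univ J
    _ = d := by rw [Finset.card_univ, Fintype.card_fin]

lemma indicator_eq (v : Fin d → Bool) :
    v = fun j => decide (j ∈ Finset.univ.filter (fun j => v j = true)) := by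
  funext j
  cases hvj : v j <;> simp [hvj]

/-- Existence of a strictly improving swap whenever `J` is not the top-index set. -/
lemma exists_swap {p : Fin d → ℝ} (hdist : Function.Injective p) {J : Finset (Fin d)}
    (hne : J ≠ topIdx p J.card) :
    ∃ a b, a ∈ J ∧ b ∉ J ∧ p a < p b := by
  classical
  set T := topIdx p J.card with hT
  have hcardT : T.card = J.card := card_topIdx hdist (card_le_d J)
  have hJT : (J \ T).Nonempty := by
    rw [Finset.sdiff_nonempty]
    intro hsub
    exact hne (Finset.eq_of_subset_of_card_le hsub (by omega))
  have hTJ : (T \ J).Nonempty := by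
    rw [Finset.sdiff_nonempty]
    intro hsub
    exact hne (Finset.eq_of_subset_of_card_le hsub (by omega)).symm
  obtain ⟨a, haJT⟩ := hJT
  obtain ⟨b, hbTJ⟩ := hTJ
  obtain ⟨haJ, haT⟩ := Finset.mem_sdiff.mp haJT
  obtain ⟨hbT, hbJ⟩ := Finset.mem_sdiff.mp hbTJ
  exact ⟨a, b, haJ, hbJ, p_lt_of_mem_notmem hdist haT hbT⟩

lemma score_le_top {γ : ℝ} (hγ : 0 ≤ γ) {p : Fin d → ℝ} (hp : ∀ j, p j ∈ Set.Icc (0:ℝ) 1)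
    (hdist : Function.Injective p) (J : Finset (Fin d)) :
    score γ p J ≤ score γ p (topIdx p J.card) := by
  classical
  generalize hn : (J \ topIdx p J.card).card = n
  induction n generalizing J with
  | zero =>
    have hsub : J ⊆ topIdx p J.card :=
      Finset.sdiff_eq_empty_iff_subset.mp (Finset.card_eq_zero.mp hn)
    have hcardT : (topIdx p J.card).card = J.card := card_topIdx hdist (card_le_d J)
    have heq : J = topIdx p J.card := Finset.eq_of_subset_of_card_le hsub (by omega)
    rw [← heq]
  | succ n ih =>
    set T := topIdx p J.card with hT
    have hcardT : T.card = J.card := card_topIdx hdist (card_le_d J)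
    have hne : J ≠ T := by
      intro hc
      rw [hc, Finset.sdiff_self, Finset.card_empty] at hn
      omega
    have hJT : (J \ T).Nonempty := Finset.card_pos.mp (by omega)
    obtain ⟨a, haJT⟩ := hJT
    obtain ⟨haJ, haT⟩ := Finset.mem_sdiff.mp haJT
    have hTJ : (T \ J).Nonempty := by
      rw [Finset.sdiff_nonempty]
      intro hsub
      exact hne (Finset.eq_of_subset_of_card_le hsub (by omega)).symm
    obtain ⟨b, hbTJ⟩ := hTJ
    obtain ⟨hbT, hbJ⟩ := Finset.mem_sdiff.mp hbTJ
    have hab : p a < p b := p_lt_of_mem_notmem hdist haT hbT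
    set J' := insert b (J.erase a) with hJ'
    have hbJe : b ∉ J.erase a := fun h => hbJ (Finset.mem_of_mem_erase h)
    have hcard' : J'.card = J.card := by
      rw [hJ', Finset.card_insert_of_notMem hbJe, Finset.card_erase_of_mem haJ]
      have : 1 ≤ J.card := Finset.card_pos.mpr ⟨a, haJ⟩
      omega
    have hJ'T : (J' \ T).card = n := by
      have he : J' \ T = (J \ T).erase a := by
        ext j
        simp only [hJ', Finset.mem_sdiff, Finset.mem_insert, Finset.mem_erase]
        constructor
        · rintro ⟨rfl | ⟨hja, hjJ⟩, hjT⟩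
          · exact absurd hbT hjT
          · exact ⟨hja, hjJ, hjT⟩
        · rintro ⟨hja, hjJ, hjT⟩
          exact ⟨Or.inr ⟨hja, hjJ⟩, hjT⟩
      rw [he, Finset.card_erase_of_mem haJT, hn]
      omega
    have h1 : score γ p J < score γ p J' := score_lt hγ hp haJ hbJ hab
    have h2 := ih J' (by rw [hcard', ← hT]; exact hJ'T)
    rw [hcard', ← hT] at h2
    linarith

end IoUAux

open IoUAux in
/-- **The Bayes rule for IoU-segmentation.** `v` maximizes `IoU_γ(·; p)` over `{0,1}^d`
iff `v` is the indicator of the top-`τ*` index set for some `τ*` maximizing `ϖ` over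
`{0, 1, …, d}`. -/
theorem iou_bayes_rule {d : ℕ} (hd : 1 ≤ d) (γ : ℝ) (hγ : 0 ≤ γ)
    (p : Fin d → ℝ) (hp : ∀ j, p j ∈ Set.Icc (0 : ℝ) 1)
    (hdist : Function.Injective p) (v : Fin d → Bool) :
    (∀ w : Fin d → Bool, iou γ p w ≤ iou γ p v) ↔
      ∃ τ ≤ d, (∀ τ' ≤ d, iouScore γ p τ' ≤ iouScore γ p τ) ∧
        v = fun j => decide (j ∈ topIdx p τ) := by
  classical
  constructor
  · intro hmax
    set J := Finset.univ.filter (fun j => v j = true) with hJdef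
    have hv : v = fun j => decide (j ∈ J) := indicator_eq v
    have hτd : J.card ≤ d := card_le_d J
    have hJT : J = topIdx p J.card := by
      by_contra hne
      obtain ⟨a, b, haJ, hbJ, hab⟩ := exists_swap hdist hne
      have h1 : score γ p J < score γ p (insert b (J.erase a)) := score_lt hγ hp haJ hbJ hab
      have h2 : iou γ p (fun j => decide (j ∈ insert b (J.erase a))) ≤ iou γ p v := hmax _
      rw [hv, iou_eq_score, iou_eq_score] at h2
      linarith
    refine ⟨J.card, hτd, ?_, by rw [← hJT]; exact hv⟩
    intro τ' hτ'
    have h2 : iou γ p (fun j => decide (j ∈ topIdx p τ')) ≤ iou γ p v := hmax _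
    rw [hv, iou_eq_score, iou_eq_score] at h2
    rw [iouScore_eq_score hdist hτ', iouScore_eq_score hdist hτd, ← hJT]
    exact h2
  · rintro ⟨τ, hτ, hbest, rfl⟩
    intro w
    set K := Finset.univ.filter (fun j => w j = true) with hKdef
    have hw : w = fun j => decide (j ∈ K) := indicator_eq w
    have hKd : K.card ≤ d := card_le_d K
    calc iou γ p w = score γ p K := by rw [hw, iou_eq_score]
      _ ≤ score γ p (topIdx p K.card) := score_le_top hγ hp hdist K
      _ = iouScore γ p K.card := (iouScore_eq_score hdist hKd).symm
      _ ≤ iouScore γ p τ := hbest K.card hKd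
      _ = score γ p (topIdx p τ) := iouScore_eq_score hdist hτ
      _ = iou γ p (fun j => decide (j ∈ topIdx p τ)) := (iou_eq_score γ p (topIdx p τ)).symm
end

section
/- Let ζ_0, ζ_1, …, ζ_{d−1} be a positive nondecreasing sequence of reals, and for j ∈ {1,…,d} define Q_j = Σ_{l=0}^{d−1} P(Γ_{∖j} = l)/ζ_l. Then for any two indices j, j', the difference Q_j − Q_{j'} has the same sign as p_j − p_{j'}; in particular, if p_1 ≥ p_2 ≥ ⋯ ≥ p_d then Q_1 ≥ Q_2 ≥ ⋯ ≥ Q_d. -/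
open Finset

noncomputable def pb {d : ℕ} (p : Fin d → ℝ) (S : Finset (Fin d)) (l : ℕ) : ℝ :=
  ∑ A ∈ S.powersetCard l, ∏ j ∈ S, (if j ∈ A then p j else 1 - p j)

lemma pmfOn_eq_pb {d : ℕ} (S : Finset (Fin d)) (p : Fin d → ℝ) (l : ℕ) :
    pmfOn S p l = pb p S l := by
  rw [pmfOn, pb, ← Finset.sum_filter]
  refine Finset.sum_bij' (fun y _ => S.filter (fun j => y j = true))
    (fun A _ => fun i => decide (i ∈ A)) ?_ ?_ ?_ ?_ ?_
  · intro y hy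
    simp only [Finset.mem_filter, Finset.mem_univ, true_and] at hy
    simp [Finset.mem_powersetCard, Finset.filter_subset, hy.2]
  · intro A hA
    simp only [Finset.mem_powersetCard] at hA
    simp only [Finset.mem_filter, Finset.mem_univ, true_and]
    constructor
    · intro j hj
      simp only [decide_eq_false_iff_not]
      exact fun h => hj (hA.1 h)
    · have : S.filter (fun j => decide (j ∈ A) = true) = A := by
        ext x
        simp only [Finset.mem_filter, decide_eq_true_eq]
        exact ⟨fun h => h.2, fun h => ⟨hA.1 h, h⟩⟩
      rw [this, hA.2]
  · intro y hy
    simp only [Finset.mem_filter, Finset.mem_univ, true_and] at hy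
    funext i
    by_cases hi : i ∈ S
    · simp [hi]
    · simp [hi, hy.1 i hi]
  · intro A hA
    simp only [Finset.mem_powersetCard] at hA
    ext x
    simp only [Finset.mem_filter, decide_eq_true_eq]
    exact ⟨fun h => h.2, fun h => ⟨hA.1 h, h⟩⟩
  · intro y hy
    refine Finset.prod_congr rfl fun j hj => ?_
    simp [hj]

lemma pb_nonneg {d : ℕ} {p : Fin d → ℝ} (hp : ∀ i, p i ∈ Set.Icc (0 : ℝ) 1)
    (S : Finset (Fin d)) (l : ℕ) : 0 ≤ pb p S l := by
  refine Finset.sum_nonneg fun A _ => Finset.prod_nonneg fun j _ => ?_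
  have := hp j
  rw [Set.mem_Icc] at this
  split <;> linarith [this.1, this.2]

lemma pb_of_card_lt {d : ℕ} {p : Fin d → ℝ} {S : Finset (Fin d)} {l : ℕ}
    (h : S.card < l) : pb p S l = 0 := by
  rw [pb, Finset.powersetCard_eq_empty.2 h, Finset.sum_empty]

lemma pb_zero_erase {d : ℕ} (p : Fin d → ℝ) {S : Finset (Fin d)} {a : Fin d} (ha : a ∈ S) :
    pb p S 0 = (1 - p a) * pb p (S.erase a) 0 := by
  have hins : insert a (S.erase a) = S := Finset.insert_erase ha
  have hnot : a ∉ S.erase a := Finset.notMem_erase a S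
  rw [pb, pb]
  simp only [Finset.powersetCard_zero, Finset.sum_singleton]
  rw [← hins, Finset.prod_insert hnot]
  simp

lemma pb_succ_erase {d : ℕ} (p : Fin d → ℝ) {S : Finset (Fin d)} {a : Fin d} (ha : a ∈ S)
    (l : ℕ) :
    pb p S (l + 1) = (1 - p a) * pb p (S.erase a) (l + 1) + p a * pb p (S.erase a) l := by
  have hins : insert a (S.erase a) = S := Finset.insert_erase ha
  have hnot : a ∉ S.erase a := Finset.notMem_erase a S
  set T := S.erase a with hT
  rw [pb, ← hins, Finset.powersetCard_succ_insert hnot]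
  have hdisj : Disjoint (Finset.powersetCard (l + 1) T)
      ((Finset.powersetCard l T).image (insert a)) := by
    rw [Finset.disjoint_left]
    intro A hA hA'
    simp only [Finset.mem_image] at hA'
    obtain ⟨B, hB, rfl⟩ := hA'
    rw [Finset.mem_powersetCard] at hA
    exact hnot (hA.1 (Finset.mem_insert_self a B))
  rw [Finset.sum_union hdisj]
  have h1 : ∑ A ∈ Finset.powersetCard (l + 1) T, ∏ j ∈ insert a T, (if j ∈ A then p j else 1 - p j)
      = (1 - p a) * pb p T (l + 1) := by
    rw [pb, Finset.mul_sum]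
    refine Finset.sum_congr rfl fun A hA => ?_
    rw [Finset.mem_powersetCard] at hA
    have haA : a ∉ A := fun h => hnot (hA.1 h)
    rw [Finset.prod_insert hnot, if_neg haA]
  have hinj : ∀ A ∈ Finset.powersetCard l T, ∀ B ∈ Finset.powersetCard l T,
      insert a A = insert a B → A = B := by
    intro A hA B hB hAB
    rw [Finset.mem_powersetCard] at hA hB
    have haA : a ∉ A := fun h => hnot (hA.1 h)
    have haB : a ∉ B := fun h => hnot (hB.1 h)
    rw [← Finset.erase_insert haA, hAB, Finset.erase_insert haB]
  have h2 : ∑ A ∈ (Finset.powersetCard l T).image (insert a),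
      ∏ j ∈ insert a T, (if j ∈ A then p j else 1 - p j) = p a * pb p T l := by
    rw [Finset.sum_image hinj, pb, Finset.mul_sum]
    refine Finset.sum_congr rfl fun A hA => ?_
    rw [Finset.mem_powersetCard] at hA
    rw [Finset.prod_insert hnot, if_pos (Finset.mem_insert_self a A)]
    congr 1
    refine Finset.prod_congr rfl fun j hj => ?_
    have : j ≠ a := fun h => hnot (h ▸ hj)
    simp [Finset.mem_insert, this]
  rw [h1, h2]

/-- `Q_j = Σ_{l=0}^{d-1} P(Γ_{∖j} = l)/ζ_l`, where `Γ_{∖j} = Σ_{i ≠ j} Bᵢ`. -/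
noncomputable def Qscore {d : ℕ} (p : Fin d → ℝ) (ζ : ℕ → ℝ) (j : Fin d) : ℝ :=
  ∑ l ∈ Finset.range d, pmfOn (Finset.univ.erase j) p l / ζ l

lemma Qscore_decomp {d : ℕ} (hd : 2 ≤ d) (p : Fin d → ℝ) (ζ : ℕ → ℝ) {j j' : Fin d}
    (hne : j ≠ j') :
    Qscore p ζ j =
      (1 - p j') * (∑ l ∈ Finset.range d, pb p ((Finset.univ.erase j).erase j') l / ζ l) +
      p j' * (∑ l ∈ Finset.range (d - 1), pb p ((Finset.univ.erase j).erase j') l / ζ (l + 1)) := by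
  set T := (Finset.univ.erase j).erase j' with hT
  have hj' : j' ∈ (Finset.univ : Finset (Fin d)).erase j :=
    Finset.mem_erase.2 ⟨hne.symm, Finset.mem_univ _⟩
  have expand : ∀ l ∈ Finset.range d,
      pmfOn (Finset.univ.erase j) p l / ζ l =
        (if l = 0 then (1 - p j') * pb p T 0 / ζ 0
         else ((1 - p j') * pb p T l + p j' * pb p T (l - 1)) / ζ l) := by
    intro l _
    rw [pmfOn_eq_pb]
    rcases l with _ | m
    · rw [pb_zero_erase p hj']
      simp [hT]
    · rw [pb_succ_erase p hj' m]
      simp [hT]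
  obtain ⟨e, rfl⟩ : ∃ e, d = e + 2 := ⟨d - 2, by omega⟩
  have h21 : e + 2 - 1 = e + 1 := rfl
  rw [Qscore, Finset.sum_congr rfl expand, h21, Finset.sum_range_succ',
    Finset.sum_range_succ' (fun l => pb p T l / ζ l), if_pos rfl]
  have step : ∀ l ∈ Finset.range (e + 1),
      (if l + 1 = 0 then (1 - p j') * pb p T 0 / ζ 0
       else ((1 - p j') * pb p T (l + 1) + p j' * pb p T (l + 1 - 1)) / ζ (l + 1)) =
      (1 - p j') * (pb p T (l + 1) / ζ (l + 1)) + p j' * (pb p T l / ζ (l + 1)) := by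
    intro l _
    rw [if_neg (Nat.succ_ne_zero l)]
    simp only [Nat.add_sub_cancel]
    ring
  rw [Finset.sum_congr rfl step, Finset.sum_add_distrib, ← Finset.mul_sum, ← Finset.mul_sum]
  ring

/-- **Monotonicity of the leave-one-out scores.** For a positive nondecreasing sequence
`ζ_0, …, ζ_{d-1}`, the difference `Q_j - Q_{j'}` has the same (weak) sign as
`p_j - p_{j'}`: if `p_{j'} ≤ p_j` then `Q_{j'} ≤ Q_j`; in particular, if
`p_1 ≥ p_2 ≥ ⋯ ≥ p_d` then `Q_1 ≥ Q_2 ≥ ⋯ ≥ Q_d`. -/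
theorem Qscore_monotone {d : ℕ} (hd : 2 ≤ d) (p : Fin d → ℝ)
    (hp : ∀ i, p i ∈ Set.Icc (0 : ℝ) 1) (ζ : ℕ → ℝ)
    (hζpos : ∀ l, l < d → 0 < ζ l)
    (hζmono : ∀ k l, k ≤ l → l < d → ζ k ≤ ζ l) :
    (∀ j j' : Fin d, p j' ≤ p j → Qscore p ζ j' ≤ Qscore p ζ j) ∧
    (Antitone p → Antitone (Qscore p ζ)) := by
  have main : ∀ j j' : Fin d, p j' ≤ p j → Qscore p ζ j' ≤ Qscore p ζ j := by
    intro j j' hle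
    by_cases hjj : j = j'
    · rw [hjj]
    · set T := (Finset.univ.erase j).erase j' with hT
      have hTsymm : (Finset.univ.erase j').erase j = T := Finset.erase_right_comm
      have hQj := Qscore_decomp hd p ζ hjj
      have hQj' := Qscore_decomp hd p ζ (Ne.symm hjj)
      rw [hTsymm] at hQj'
      rw [← hT] at hQj
      set A := ∑ l ∈ Finset.range d, pb p T l / ζ l with hA
      set B := ∑ l ∈ Finset.range (d - 1), pb p T l / ζ (l + 1) with hB
      have hcard : T.card = d - 2 := by
        rw [hT, Finset.card_erase_of_mem (Finset.mem_erase.2 ⟨Ne.symm hjj, Finset.mem_univ _⟩),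
          Finset.card_erase_of_mem (Finset.mem_univ _), Finset.card_univ, Fintype.card_fin]
        omega
      have hBA : B ≤ A := by
        have hlast : pb p T (d - 1) = 0 := pb_of_card_lt (by omega)
        have hsum := Finset.sum_range_succ (fun l => pb p T l / ζ l) (d - 1)
        rw [show d - 1 + 1 = d from by omega] at hsum
        have hA' : A = ∑ l ∈ Finset.range (d - 1), pb p T l / ζ l := by
          rw [hA, hsum, hlast, zero_div, add_zero]
        rw [hA', hB]
        refine Finset.sum_le_sum fun l hl => ?_
        rw [Finset.mem_range] at hl
        have h1 : 0 < ζ l := hζpos l (by omega)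
        have h2 : ζ l ≤ ζ (l + 1) := hζmono l (l + 1) (by omega) (by omega)
        exact div_le_div_of_nonneg_left (pb_nonneg hp T l) h1 h2
      have key : Qscore p ζ j - Qscore p ζ j' = (p j - p j') * (A - B) := by
        rw [hQj, hQj']; ring
      nlinarith [key]
  exact ⟨main, fun hA j j' hle => main j j' (hA hle)⟩
end

section
/- For any real τ ≥ 1 such that ((d+1)/d) Σ_{j=1}^d p_j + τ − 1 > 0: 1/(Σ_{j=1}^d p_j + τ) ≤ E[1/(Γ + τ)] ≤ 1/( ((d+1)/d) Σ_{j=1}^d p_j + τ − 1 ). -/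
open Finset

/-- `E[1/(Γ + τ)]` for the Poisson-binomial variable `Γ = Σⱼ Bⱼ`. -/
noncomputable def expInvShift {d : ℕ} (p : Fin d → ℝ) (τ : ℝ) : ℝ :=
  ∑ y : Fin d → Bool, bw p y / ((cnt y : ℝ) + τ)

/- ### Auxiliary development -/

/-- Expectation of `f(Γ)` for the Poisson-binomial on a list of probabilities. -/
noncomputable def pbExp : List ℝ → (ℕ → ℝ) → ℝ
  | [], f => f 0
  | p :: t, f => (1 - p) * pbExp t f + p * pbExp t (fun k => f (k + 1))

lemma pbExp_perm {l₁ l₂ : List ℝ} (h : l₁.Perm l₂) : ∀ f, pbExp l₁ f = pbExp l₂ f := by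
  induction h with
  | nil => intro f; rfl
  | cons a _ ih => intro f; simp [pbExp, ih]
  | swap a b l => intro f; simp [pbExp]; ring
  | trans _ _ ih₁ ih₂ => intro f; rw [ih₁, ih₂]

/-- Expectation of `f(Γ)` for the Poisson-binomial on a multiset of probabilities. -/
noncomputable def MF (M : Multiset ℝ) (f : ℕ → ℝ) : ℝ :=
  Quot.liftOn M (fun l => pbExp l f) (fun _ _ h => pbExp_perm h f)

@[simp] lemma MF_zero (f : ℕ → ℝ) : MF 0 f = f 0 := rfl

@[simp] lemma MF_cons (a : ℝ) (M : Multiset ℝ) (f : ℕ → ℝ) :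
    MF (a ::ₘ M) f = (1 - a) * MF M f + a * MF M (fun k => f (k + 1)) :=
  Quot.inductionOn M (fun _ => rfl)

lemma MF_const (M : Multiset ℝ) (c : ℝ) : MF M (fun _ => c) = c := by
  induction M using Multiset.induction_on with
  | empty => rfl
  | cons a M ih => simp [ih]; ring

lemma MF_add (M : Multiset ℝ) (f g : ℕ → ℝ) :
    MF M (fun k => f k + g k) = MF M f + MF M g := by
  induction M using Multiset.induction_on generalizing f g with
  | empty => rfl
  | cons a M ih => simp [ih]; ring

lemma MF_smul (M : Multiset ℝ) (c : ℝ) (f : ℕ → ℝ) :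
    MF M (fun k => c * f k) = c * MF M f := by
  induction M using Multiset.induction_on generalizing f with
  | empty => rfl
  | cons a M ih => simp [ih]; ring

lemma MF_mono (M : Multiset ℝ) (hM : ∀ x ∈ M, x ∈ Set.Icc (0:ℝ) 1) {f g : ℕ → ℝ}
    (hfg : ∀ k, f k ≤ g k) : MF M f ≤ MF M g := by
  induction M using Multiset.induction_on generalizing f g with
  | empty => exact hfg 0
  | cons a M ih =>
    have ha := hM a (Multiset.mem_cons_self a M)
    have hM' : ∀ x ∈ M, x ∈ Set.Icc (0:ℝ) 1 := fun x hx => hM x (Multiset.mem_cons_of_mem hx)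
    simp only [MF_cons]
    have h1 : MF M f ≤ MF M g := ih hM' hfg
    have h2 : MF M (fun k => f (k+1)) ≤ MF M (fun k => g (k+1)) := ih hM' (fun k => hfg (k+1))
    have := ha.1; have := ha.2
    nlinarith

/-- `F M τ = E[1/(Γ_M + τ)]`. -/
noncomputable def F (M : Multiset ℝ) (τ : ℝ) : ℝ := MF M (fun k => 1 / ((k : ℝ) + τ))

lemma invshift_succ (τ : ℝ) :
    (fun k : ℕ => 1 / (((k+1 : ℕ) : ℝ) + τ)) = fun k : ℕ => 1 / ((k:ℝ) + (τ+1)) := by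
  funext k; push_cast; ring_nf

@[simp] lemma F_zero (τ : ℝ) : F 0 τ = 1 / τ := by simp [F]

lemma F_cons (a : ℝ) (M : Multiset ℝ) (τ : ℝ) :
    F (a ::ₘ M) τ = (1 - a) * F M τ + a * F M (τ + 1) := by
  simp only [F, MF_cons, invshift_succ]

/-- Lower bound: `1/(sum + τ) ≤ F M τ`. -/
lemma F_lower (M : Multiset ℝ) (hM : ∀ x ∈ M, x ∈ Set.Icc (0:ℝ) 1) :
    ∀ τ : ℝ, 0 < τ → 1 / (M.sum + τ) ≤ F M τ := by
  induction M using Multiset.induction_on with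
  | empty => intro τ hτ; simp
  | cons a M ih =>
    intro τ hτ
    have ha := hM a (Multiset.mem_cons_self a M)
    have hM' : ∀ x ∈ M, x ∈ Set.Icc (0:ℝ) 1 := fun x hx => hM x (Multiset.mem_cons_of_mem hx)
    have hs : 0 ≤ M.sum := Multiset.sum_nonneg (fun x hx => (hM' x hx).1)
    have h1 := ih hM' τ hτ
    have h2 := ih hM' (τ+1) (by linarith)
    rw [F_cons, Multiset.sum_cons]
    set A := M.sum + τ with hA
    have hApos : 0 < A := by positivity
    have key : 1 / (A + a) ≤ (1 - a) * (1/A) + a * (1/(A+1)) := by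
      rw [div_le_iff₀ (by nlinarith [ha.1])]
      have e1 : (1:ℝ)/A = A⁻¹ := one_div A
      have e2 : (1:ℝ)/(A+1) = (A+1)⁻¹ := one_div _
      rw [e1, e2]
      have hA1 : (0:ℝ) < A + 1 := by linarith
      field_simp
      nlinarith [ha.1, ha.2, sq_nonneg a]
    have h3 : (1-a) * (1/A) + a*(1/(A+1)) ≤ (1-a) * F M τ + a * F M (τ+1) := by
      have : M.sum + (τ+1) = A + 1 := by rw [hA]; ring
      rw [this] at h2
      nlinarith [ha.1, ha.2]
    calc 1/(a + M.sum + τ) = 1/(A+a) := by rw [hA]; ring_nf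
      _ ≤ _ := key
      _ ≤ _ := h3

lemma F_nonneg (M : Multiset ℝ) (hM : ∀ x ∈ M, x ∈ Set.Icc (0:ℝ) 1) {τ : ℝ} (hτ : 0 < τ) :
    0 ≤ F M τ := by
  have hs : 0 ≤ M.sum := Multiset.sum_nonneg (fun x hx => (hM x hx).1)
  have := F_lower M hM τ hτ
  have : (0:ℝ) < 1 / (M.sum + τ) := by positivity
  linarith [F_lower M hM τ hτ]

/-- Monotonicity in `τ`. -/
lemma F_anti (M : Multiset ℝ) (hM : ∀ x ∈ M, x ∈ Set.Icc (0:ℝ) 1) {σ τ : ℝ}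
    (hσ : 0 < σ) (hστ : σ ≤ τ) : F M τ ≤ F M σ := by
  apply MF_mono M hM
  intro k
  apply one_div_le_one_div_of_le (by positivity)
  have : (0:ℕ) ≤ k := Nat.zero_le k
  push_cast
  linarith [Nat.cast_nonneg (α := ℝ) k]

/-- the function `k ↦ k/(k+τ-1)`. -/
noncomputable def hfun (τ : ℝ) (k : ℕ) : ℝ := (k : ℝ) / ((k : ℝ) + τ - 1)

/-- Key identity: `Σ_{a∈M} a · F(M∖a, τ) = E[Γ/(Γ+τ-1)]`. -/
lemma ES_eq [DecidableEq ℝ] (M : Multiset ℝ) : ∀ τ : ℝ, 1 ≤ τ →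
    (M.map (fun a => a * F (M.erase a) τ)).sum = MF M (hfun τ) := by
  induction M using Multiset.induction_on with
  | empty => intro τ hτ; simp [hfun]
  | cons a M ih =>
    intro τ hτ
    have hstep : (M.map (fun b => b * F ((a ::ₘ M).erase b) τ)).sum
        = (1-a) * (M.map (fun b => b * F (M.erase b) τ)).sum
          + a * (M.map (fun b => b * F (M.erase b) (τ+1))).sum := by
      rw [Multiset.map_congr rfl (fun b hb => by
        rw [Multiset.erase_cons_tail_of_mem hb, F_cons])]
      rw [show (fun b => b * ((1 - a) * F (M.erase b) τ + a * F (M.erase b) (τ + 1)))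
          = fun b => (1-a) * (b * F (M.erase b) τ) + a * (b * F (M.erase b) (τ+1)) by
        funext b; ring]
      rw [Multiset.sum_map_add, Multiset.sum_map_mul_left, Multiset.sum_map_mul_left]
    rw [Multiset.map_cons, Multiset.sum_cons, Multiset.erase_cons_head, hstep,
      ih τ hτ, ih (τ+1) (by linarith), MF_cons]
    have hptw : (fun k : ℕ => hfun τ (k+1)) = fun k : ℕ => hfun (τ+1) k + 1/((k:ℝ)+τ) := by
      funext k
      have hk : (0:ℝ) < (k:ℝ) + τ := by positivity
      simp only [hfun]
      push_cast
      rw [show (k:ℝ)+1+τ-1 = (k:ℝ)+τ by ring, show (k:ℝ)+(τ+1)-1 = (k:ℝ)+τ by ring,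
        ← add_div]
    have hshift : MF M (fun k => hfun τ (k+1)) = MF M (hfun (τ+1)) + F M τ := by
      rw [hptw, MF_add]; rfl
    rw [hshift]
    ring

/-- Bridge between the `Fin d → Bool` sum and `pbExp`. -/
lemma bridge (d : ℕ) : ∀ (p : Fin d → ℝ) (f : ℕ → ℝ),
    ∑ y : Fin d → Bool, bw p y * f (cnt y) = pbExp (List.ofFn p) f := by
  induction d with
  | zero =>
    intro p f
    rw [Fintype.sum_eq_single (fun _ => true) (fun y hy => absurd (funext fun j => j.elim0) hy)]
    simp [bw, cnt, pbExp]
  | succ d ih =>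
    intro p f
    have hcnt : ∀ (b : Bool) (y : Fin d → Bool),
        cnt (Fin.cons b y) = (if b = true then 1 else 0) + cnt y := by
      intro b y
      simp only [cnt, Finset.card_filter]
      rw [Fin.sum_univ_succ]
      simp [Fin.cons_zero, Fin.cons_succ]
    have hbw : ∀ (b : Bool) (y : Fin d → Bool),
        bw p (Fin.cons b y) = (if b = true then p 0 else 1 - p 0) * bw (fun i => p i.succ) y := by
      intro b y
      simp only [bw]
      rw [Fin.prod_univ_succ]
      simp [Fin.cons_zero, Fin.cons_succ]
    have e := Equiv.sum_comp (Fin.consEquiv (fun _ : Fin (d+1) => Bool))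
      (fun y => bw p y * f (cnt y))
    rw [← e, Fintype.sum_prod_type, Fintype.sum_bool]
    rw [List.ofFn_succ]
    show _ = pbExp (p 0 :: List.ofFn fun i => p i.succ) f
    rw [show pbExp (p 0 :: List.ofFn fun i => p i.succ) f
        = (1 - p 0) * pbExp (List.ofFn fun i => p i.succ) f
          + p 0 * pbExp (List.ofFn fun i => p i.succ) (fun k => f (k+1)) from rfl]
    rw [← ih (fun i => p i.succ) f, ← ih (fun i => p i.succ) (fun k => f (k+1))]
    rw [Finset.mul_sum, Finset.mul_sum, add_comm]
    congr 1
    · apply Finset.sum_congr rfl; intro y _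
      rw [show (Fin.consEquiv fun _ : Fin (d+1) => Bool) (false, y) = Fin.cons false y from rfl,
        hbw, hcnt]
      simp only [Bool.false_eq_true, if_false]
      rw [Nat.zero_add]
      ring
    · apply Finset.sum_congr rfl; intro y _
      rw [show (Fin.consEquiv fun _ : Fin (d+1) => Bool) (true, y) = Fin.cons true y from rfl,
        hbw, hcnt]
      simp only [if_true, eq_self_iff_true]
      rw [Nat.add_comm 1 (cnt y)]
      ring

lemma map_erase_idx {d : ℕ} (p : Fin d → ℝ) (A : Finset (Fin d)) (j : Fin d) (hj : j ∈ A) :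
    Multiset.map p A.val = p j ::ₘ Multiset.map p ((A.erase j)).val := by
  rw [Finset.erase_val]
  conv_lhs => rw [← Multiset.cons_erase (show j ∈ A.val from hj)]
  rw [Multiset.map_cons]

/-- **Bounds on the expected reciprocal of a shifted Poisson-binomial variable.** For any
real `τ ≥ 1` with `((d+1)/d) Σⱼ pⱼ + τ - 1 > 0`:
`1/(Σⱼ pⱼ + τ) ≤ E[1/(Γ + τ)] ≤ 1/(((d+1)/d) Σⱼ pⱼ + τ - 1)`. -/
theorem expInvShift_bounds {d : ℕ} (hd : 1 ≤ d) (p : Fin d → ℝ)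
    (hp : ∀ j, p j ∈ Set.Icc (0 : ℝ) 1) (τ : ℝ) (hτ : 1 ≤ τ)
    (hden : 0 < ((d : ℝ) + 1) / (d : ℝ) * (∑ j, p j) + τ - 1) :
    1 / ((∑ j, p j) + τ) ≤ expInvShift p τ ∧
    expInvShift p τ ≤ 1 / (((d : ℝ) + 1) / (d : ℝ) * (∑ j, p j) + τ - 1) := by
  classical
  have hτ0 : (0:ℝ) < τ := lt_of_lt_of_le one_pos hτ
  have hd0 : (0:ℝ) < d := by exact_mod_cast Nat.lt_of_lt_of_le Nat.zero_lt_one hd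
  have hdne : (d:ℝ) ≠ 0 := ne_of_gt hd0
  set s := ∑ j, p j with hs
  set Mu : Multiset ℝ := Multiset.map p Finset.univ.val with hMu
  set q : ℝ := s / d with hq
  set Me : Fin d → Multiset ℝ := fun j => Multiset.map p ((Finset.univ.erase j)).val with hMedef
  have hMe : ∀ j : Fin d, Mu = p j ::ₘ Me j := fun j =>
    map_erase_idx p Finset.univ j (Finset.mem_univ j)
  -- membership facts
  have hMem : ∀ x ∈ Mu, x ∈ Set.Icc (0:ℝ) 1 := by
    intro x hx
    rcases Multiset.mem_map.mp hx with ⟨j, _, rfl⟩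
    exact hp j
  have hMemMe : ∀ j : Fin d, ∀ x ∈ Me j, x ∈ Set.Icc (0:ℝ) 1 := by
    intro j x hx
    rcases Multiset.mem_map.mp hx with ⟨i, _, rfl⟩
    exact hp i
  have hMuSum : Mu.sum = s := by
    rw [hMu, hs, Finset.sum_eq_multiset_sum]
  have hs0 : 0 ≤ s := Finset.sum_nonneg (fun j _ => (hp j).1)
  have hsd : s ≤ d := by
    calc s ≤ ∑ _j : Fin d, (1:ℝ) := Finset.sum_le_sum (fun j _ => (hp j).2)
      _ = d := by simp
  have hq0 : 0 ≤ q := by positivity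
  have hq1 : q ≤ 1 := by rw [hq, div_le_one hd0]; exact hsd
  have hsq : s = (d:ℝ) * q := by rw [hq]; field_simp
  -- bridge
  have hbridge : expInvShift p τ = F Mu τ := by
    have h1 : expInvShift p τ = ∑ y : Fin d → Bool, bw p y * (1/((cnt y:ℝ)+τ)) := by
      unfold expInvShift
      apply Finset.sum_congr rfl
      intro y _
      rw [div_eq_mul_one_div]
    rw [h1, bridge d p (fun k => 1/((k:ℝ)+τ))]
    have h2 : Mu = ((List.ofFn p : List ℝ) : Multiset ℝ) := by
      rw [hMu, ← Fin.univ_val_map]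
    rw [h2]
    rfl
  -- N and its members
  set N : Multiset ℝ := q ::ₘ Mu with hN
  have hNmem : ∀ x ∈ N, x ∈ Set.Icc (0:ℝ) 1 := by
    intro x hx
    rcases Multiset.mem_cons.mp hx with h | h
    · exact h ▸ ⟨hq0, hq1⟩
    · exact hMem x h
  -- the deficiency terms
  set D : Fin d → ℝ := fun j => F (Me j) τ - F (Me j) (τ+1) with hDdef
  have hD0 : ∀ j, 0 ≤ D j := by
    intro j
    have := F_anti (Me j) (hMemMe j) hτ0 (by linarith : τ ≤ τ + 1)
    simp only [hDdef]
    linarith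
  set T : ℝ := ∑ j, p j * (p j - q) * D j with hT
  -- pairwise exchange positivity
  have pair : ∀ j k : Fin d, 0 ≤ (p j - p k) * (p j * D j - p k * D k) := by
    intro j k
    by_cases hjk : j = k
    · subst hjk; simp
    · have hk' : k ∈ Finset.univ.erase j :=
        Finset.mem_erase.mpr ⟨fun h => hjk h.symm, Finset.mem_univ k⟩
      have hj' : j ∈ Finset.univ.erase k :=
        Finset.mem_erase.mpr ⟨hjk, Finset.mem_univ j⟩
      set S : Multiset ℝ := Multiset.map p (((Finset.univ.erase j)).erase k).val with hSdef
      have e1 : Me j = p k ::ₘ S := map_erase_idx p (Finset.univ.erase j) k hk'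
      have e2 : Me k = p j ::ₘ S := by
        have hcomm : (Finset.univ.erase k).erase j = (Finset.univ.erase j).erase k :=
          Finset.erase_right_comm
        rw [hMedef]
        simp only
        rw [map_erase_idx p (Finset.univ.erase k) j hj', hcomm, ← hSdef]
      have hSmem : ∀ x ∈ S, x ∈ Set.Icc (0:ℝ) 1 := by
        intro x hx
        rcases Multiset.mem_map.mp hx with ⟨i, _, rfl⟩
        exact hp i
      have hab : 0 ≤ F S τ - F S (τ+1) := by
        have := F_anti S hSmem hτ0 (by linarith : τ ≤ τ + 1)
        linarith
      have hDj : D j = (1 - p k) * F S τ + p k * F S (τ+1)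
          - ((1 - p k) * F S (τ+1) + p k * F S (τ+1+1)) := by
        simp only [hDdef, e1, F_cons]
      have hDk : D k = (1 - p j) * F S τ + p j * F S (τ+1)
          - ((1 - p j) * F S (τ+1) + p j * F S (τ+1+1)) := by
        simp only [hDdef, e2, F_cons]
      have hkey : p j * D j - p k * D k = (p j - p k) * (F S τ - F S (τ+1)) := by
        rw [hDj, hDk]; ring
      rw [hkey]
      nlinarith [sq_nonneg (p j - p k)]
  -- T ≥ 0 via symmetrization
  have hTnn : 0 ≤ T := by
    have expand : ∀ j k : Fin d, (p j - p k) * (p j * D j - p k * D k)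
        = p j * (p j - p k) * D j + p k * (p k - p j) * D k := by intros; ring
    have swap : ∑ j : Fin d, ∑ k : Fin d, p k * (p k - p j) * D k
        = ∑ j : Fin d, ∑ k : Fin d, p j * (p j - p k) * D j := Finset.sum_comm
    have inner : ∀ j : Fin d, ∑ k : Fin d, p j * (p j - p k) * D j
        = ((d:ℝ) * p j - s) * (p j * D j) := by
      intro j
      have e : ∑ k : Fin d, p j * (p j - p k) * D j
          = (p j * D j) * ∑ k : Fin d, (p j - p k) := by
        rw [Finset.mul_sum]
        apply Finset.sum_congr rfl
        intro k _
        ring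
      rw [e, Finset.sum_sub_distrib, Finset.sum_const, Finset.card_univ, Fintype.card_fin,
        nsmul_eq_mul, ← hs]
      ring
    have hdT : (d:ℝ) * T = ∑ j, ((d:ℝ) * p j - s) * (p j * D j) := by
      rw [hT, Finset.mul_sum]
      apply Finset.sum_congr rfl
      intro j _
      have hx : (d:ℝ) * (p j - q) = (d:ℝ) * p j - s := by
        rw [hq]; field_simp; try ring
      linear_combination (p j * D j) * hx
    have hpos : 0 ≤ ∑ j : Fin d, ∑ k : Fin d, (p j - p k) * (p j * D j - p k * D k) :=
      Finset.sum_nonneg (fun j _ => Finset.sum_nonneg (fun k _ => pair j k))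
    have htot : ∑ j : Fin d, ∑ k : Fin d, (p j - p k) * (p j * D j - p k * D k)
        = 2 * ((d:ℝ) * T) := by
      have e : ∑ j : Fin d, ∑ k : Fin d, (p j - p k) * (p j * D j - p k * D k)
          = (∑ j : Fin d, ∑ k : Fin d, p j * (p j - p k) * D j)
            + ∑ j : Fin d, ∑ k : Fin d, p k * (p k - p j) * D k := by
        rw [← Finset.sum_add_distrib]
        apply Finset.sum_congr rfl
        intro j _
        rw [← Finset.sum_add_distrib]
        apply Finset.sum_congr rfl
        intro k _
        exact expand j k
      rw [e, swap, hdT]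
      rw [Finset.sum_congr rfl (fun j _ => inner j)]
      ring
    rw [htot] at hpos
    nlinarith
  -- decompose the ES sum over N
  have her : ∀ j : Fin d, Mu.erase (p j) = Me j := by
    intro j
    rw [hMe j, Multiset.erase_cons_head]
  have hdec : ((N.map (fun a => a * F (N.erase a) τ)).sum)
      = q * F Mu τ + ∑ j : Fin d, p j * F (q ::ₘ Me j) τ := by
    rw [hN, Multiset.map_cons, Multiset.sum_cons, Multiset.erase_cons_head]
    congr 1
    rw [Multiset.map_congr rfl (fun b hb => by
      rw [Multiset.erase_cons_tail_of_mem hb])]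
    rw [hMu, Multiset.map_map]
    rw [show (∑ j : Fin d, p j * F (q ::ₘ Me j) τ)
        = (Multiset.map (fun j => p j * F (q ::ₘ Me j) τ) Finset.univ.val).sum from
      Finset.sum_eq_multiset_sum _ _]
    apply congrArg
    apply Multiset.map_congr rfl
    intro j _
    simp only [Function.comp_apply]
    rw [← hMu, her j]
  -- per-index exchange identity
  have hper : ∀ j : Fin d, p j * F (q ::ₘ Me j) τ = p j * F Mu τ + p j * (p j - q) * D j := by
    intro j
    rw [F_cons]
    conv_rhs => rw [hMe j, F_cons]
    simp only [hDdef]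
    ring
  have hsumper : ∑ j : Fin d, p j * F (q ::ₘ Me j) τ = s * F Mu τ + T := by
    rw [Finset.sum_congr rfl (fun j _ => hper j), Finset.sum_add_distrib, ← Finset.sum_mul, ← hs,
      hT]
  -- the ES identity
  have hES : ((N.map (fun a => a * F (N.erase a) τ)).sum) = MF N (hfun τ) := ES_eq N τ hτ
  -- upper bound on MF N (hfun τ)
  have hupMF : MF N (hfun τ) ≤ 1 - (τ-1) * F Mu τ := by
    rcases eq_or_lt_of_le hτ with heq | hlt
    · -- τ = 1
      have h1 : MF N (hfun τ) ≤ MF N (fun _ => 1) := by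
        apply MF_mono N hNmem
        intro k
        simp only [hfun]
        rcases Nat.eq_zero_or_pos k with hk | hk
        · subst hk; simp
        · have hkr : (0:ℝ) < k := by exact_mod_cast hk
          rw [← heq]
          rw [show (k:ℝ) + 1 - 1 = (k:ℝ) by ring, div_self (ne_of_gt hkr)]
      rw [MF_const] at h1
      have hz : τ - 1 = 0 := by rw [← heq]; norm_num
      rw [hz]
      simpa using h1
    · -- τ > 1
      have hτ1 : (0:ℝ) < τ - 1 := by linarith
      have hid : MF N (hfun τ) = 1 - (τ-1) * MF N (fun k => 1/((k:ℝ)+τ-1)) := by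
        have hptw : hfun τ = fun k : ℕ => 1 + (-(τ-1)) * (1/((k:ℝ)+τ-1)) := by
          funext k
          have hk : (0:ℝ) < (k:ℝ)+τ-1 := by
            have : (0:ℝ) ≤ (k:ℝ) := Nat.cast_nonneg k
            linarith
          simp only [hfun]
          field_simp
          ring
        rw [hptw, MF_add N (fun _ => 1) (fun k => (-(τ-1)) * (1/((k:ℝ)+τ-1))), MF_const,
          MF_smul]
        ring
      have hmon : F Mu τ ≤ MF N (fun k => 1/((k:ℝ)+τ-1)) := by
        rw [hN, MF_cons]
        have hgs : (fun k : ℕ => 1/(((k+1:ℕ):ℝ)+τ-1)) = fun k : ℕ => 1/((k:ℝ)+τ) := by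
          funext k; push_cast; ring_nf
        rw [hgs]
        have hX : F Mu τ ≤ MF Mu (fun k => 1/((k:ℝ)+τ-1)) := by
          apply MF_mono Mu hMem
          intro k
          have hk : (0:ℝ) < (k:ℝ)+τ-1 := by
            have : (0:ℝ) ≤ (k:ℝ) := Nat.cast_nonneg k
            linarith
          apply one_div_le_one_div_of_le hk
          linarith
        have : F Mu τ = MF Mu (fun k => 1/((k:ℝ)+τ)) := rfl
        nlinarith [hX, hq0, hq1]
      nlinarith
  -- main inequality
  have hFnn : 0 ≤ F Mu τ := F_nonneg Mu hMem hτ0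
  have hkey : (((d:ℝ)+1) * q + (τ-1)) * F Mu τ ≤ 1 := by
    have h1 : q * F Mu τ + (s * F Mu τ + T) = MF N (hfun τ) := by
      rw [← hES, hdec, hsumper]
    have h2 : q * F Mu τ + s * F Mu τ ≤ 1 - (τ-1) * F Mu τ := by
      linarith [hTnn, hupMF, h1]
    have h3 : (((d:ℝ)+1) * q + (τ-1)) * F Mu τ
        = q * F Mu τ + s * F Mu τ + (τ-1) * F Mu τ := by
      rw [hsq]; ring
    linarith [h2, h3]
  constructor
  · -- lower bound
    rw [hbridge]
    have := F_lower Mu hMem τ hτ0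
    rwa [hMuSum] at this
  · -- upper bound
    rw [hbridge]
    rw [le_div_iff₀ hden]
    have hc : ((d:ℝ)+1)/d * s + τ - 1 = ((d:ℝ)+1) * q + (τ-1) := by
      rw [hq]; field_simp; ring
    calc F Mu τ * (((d:ℝ)+1)/d * s + τ - 1)
        = (((d:ℝ)+1) * q + (τ-1)) * F Mu τ := by rw [hc]; ring
      _ ≤ 1 := hkey
end
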